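/- arXiv:2309.13346 — 3 statements merged into one kernel-verified Lean document; each statement's English description precedes it below -/
import Mathlib

section
/- Let φ and ψ be anisotropic diagonal quasilinear p-forms over F such that φ and ψ are weakly Vishik equivalent. Then G_F(φ) = G_F(ψ), i.e., the two forms have exactly the same similarity factors. -/
/-!
Diagonal quasilinear `p`-forms over a field `F` of characteristic `p`,
following Hoffmann and Zemková. A form of dimension `n` is recorded by its
coefficient tuple `a : ι → F` (for a finite index type `ι`), the form being
`x ↦ ∑ i, a i * (x i)^p`.
-/

universe u

namespace QLF

open scoped BigOperators

/-- Evaluation of the diagonal quasilinear `p`-form with coefficients `a` at `x`. -/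
def eval (p : ℕ) {F : Type*} [CommRing F] {ι : Type*} [Fintype ι]
    (a : ι → F) (x : ι → F) : F :=
  ∑ i, a i * x i ^ p

/-- A form is isotropic if it has a nontrivial zero. -/
def Isotropic (p : ℕ) {F : Type*} [CommRing F] {ι : Type*} [Fintype ι] (a : ι → F) : Prop :=
  ∃ x : ι → F, x ≠ 0 ∧ eval p a x = 0

/-- A form is anisotropic if it has no nontrivial zero. -/
def Anisotropic (p : ℕ) {F : Type*} [CommRing F] {ι : Type*} [Fintype ι] (a : ι → F) : Prop :=
  ¬ Isotropic p a

/-- In characteristic `p`, the zero set of a diagonal quasilinear `p`-form is a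
linear subspace. -/
def zeroSubmodule (p : ℕ) [Fact p.Prime] {F : Type*} [Field F] [CharP F p]
    {ι : Type*} [Fintype ι] (a : ι → F) : Submodule F (ι → F) where
  carrier := {x | eval p a x = 0}
  zero_mem' := by
    have hp : p ≠ 0 := (Fact.out : p.Prime).ne_zero
    simp [eval, zero_pow hp]
  add_mem' := by
    intro x y hx hy
    haveI : ExpChar F p := .prime Fact.out
    have hxy : eval p a (x + y) = eval p a x + eval p a y := by
      simp only [eval, Pi.add_apply]
      rw [← Finset.sum_add_distrib]
      exact Finset.sum_congr rfl fun i _ => by rw [add_pow_char, mul_add]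
    simp only [Set.mem_setOf_eq] at *
    rw [hxy, hx, hy, add_zero]
  smul_mem' := by
    intro c x hx
    simp only [Set.mem_setOf_eq] at *
    have hcx : eval p a (c • x) = c ^ p * eval p a x := by
      simp only [eval, Pi.smul_apply, smul_eq_mul, Finset.mul_sum]
      exact Finset.sum_congr rfl fun i _ => by rw [mul_pow]; ring
    rw [hcx, hx, mul_zero]

/-- The defect `i₀` of a form: the dimension of its zero set. -/
noncomputable def defect (p : ℕ) [Fact p.Prime] {F : Type*} [Field F] [CharP F p]
    {ι : Type*} [Fintype ι] (a : ι → F) : ℕ :=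
  Module.finrank F (zeroSubmodule p a)

/-- Isometry of forms: a linear bijection carrying one form into the other. -/
def Isometric (p : ℕ) {F : Type*} [Field F] {ι κ : Type*} [Fintype ι] [Fintype κ]
    (a : ι → F) (b : κ → F) : Prop :=
  ∃ T : (ι → F) ≃ₗ[F] (κ → F), ∀ x, eval p a x = eval p b (T x)

/-- `a` is a subform of `b`. -/
def Subform (p : ℕ) {F : Type*} [Field F] {ι κ : Type*} [Fintype ι] [Fintype κ]
    (a : ι → F) (b : κ → F) : Prop :=
  ∃ T : (ι → F) →ₗ[F] (κ → F), Function.Injective T ∧ ∀ x, eval p a x = eval p b (T x)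

/-- Similarity of forms: `a ≃ c·b` for some scalar `c ≠ 0`. -/
def Similar (p : ℕ) {F : Type*} [Field F] {ι κ : Type*} [Fintype ι] [Fintype κ]
    (a : ι → F) (b : κ → F) : Prop :=
  ∃ c : F, c ≠ 0 ∧ Isometric p a (fun i => c * b i)

/-- Vishik equivalence: same dimension, and equal defects over every field
extension `E/F`. -/
def VishikEquiv (p : ℕ) [Fact p.Prime] {F : Type u} [Field F] [CharP F p]
    {ι κ : Type*} [Fintype ι] [Fintype κ] (a : ι → F) (b : κ → F) : Prop :=
  Fintype.card ι = Fintype.card κ ∧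
    ∀ (E : Type u) [Field E] [CharP E p] (f : F →+* E),
      defect p (f ∘ a) = defect p (f ∘ b)

/-- Weak Vishik equivalence: same dimension, and equal defects over every field
extension of the shape `E = F(α)` with `αᵖ ∈ F` (this includes `E = F`). -/
def WeakVishikEquiv (p : ℕ) [Fact p.Prime] {F : Type u} [Field F] [CharP F p]
    {ι κ : Type*} [Fintype ι] [Fintype κ] (a : ι → F) (b : κ → F) : Prop :=
  Fintype.card ι = Fintype.card κ ∧
    ∀ (E : Type u) [Field E] [CharP E p] (f : F →+* E) (α : E),
      α ^ p ∈ Set.range ⇑f →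
      Subfield.closure (insert α (Set.range ⇑f)) = ⊤ →
      defect p (f ∘ a) = defect p (f ∘ b)

/-- The set `Fᵖ` of `p`-th powers. -/
def pSet (p : ℕ) (F : Type*) [Field F] : Set F := Set.range fun x : F => x ^ p

/-- The subfield `Fᵖ` of `p`-th powers (in characteristic `p` the set of `p`-th
powers is already a subfield, so the closure adds nothing). -/
def pthSubfield (p : ℕ) (F : Type*) [Field F] : Subfield F :=
  Subfield.closure (pSet p F)

/-- The subfield `Fᵖ(s)` generated by a set `s` over `Fᵖ`. -/
def adjoin (p : ℕ) {F : Type*} [Field F] (s : Set F) : Subfield F :=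
  Subfield.closure (pSet p F ∪ s)

/-- The degree `[N : k]` of a subfield `N` over a subfield `k` (for `k ≤ N`,
the `k`-span of `N` in `F` is `N` itself, so this is the `k`-dimension of `N`). -/
noncomputable def degOver {F : Type*} [Field F] (k : Subfield F) (N : Subfield F) : ℕ :=
  Module.finrank k (Submodule.span k (N : Set F))

/-- The set `D_F(φ)` of values of the form. -/
def values (p : ℕ) {F : Type*} [CommRing F] {ι : Type*} [Fintype ι] (a : ι → F) : Set F :=
  Set.range (eval p a)

/-- The norm field `N_F(φ)`: the subfield generated over `Fᵖ` by all quotients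
of nonzero values of `φ`. -/
def normField (p : ℕ) {F : Type*} [Field F] {ι : Type*} [Fintype ι] (a : ι → F) : Subfield F :=
  adjoin p {z : F | ∃ u ∈ values p a, ∃ v ∈ values p a, u ≠ 0 ∧ v ≠ 0 ∧ z = u / v}

/-- The norm degree `ndeg_F(φ) = [N_F(φ) : Fᵖ]`. -/
noncomputable def ndeg (p : ℕ) {F : Type*} [Field F] {ι : Type*} [Fintype ι] (a : ι → F) : ℕ :=
  degOver (pthSubfield p F) (normField p a)

/-- An anisotropic form is minimal if `ndeg_F(φ) = p^(dim φ - 1)`. -/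
def Minimal (p : ℕ) {F : Type*} [Field F] {ι : Type*} [Fintype ι] (a : ι → F) : Prop :=
  Anisotropic p a ∧ ndeg p a = p ^ (Fintype.card ι - 1)

/-- The quasi-Pfister form `⟪b₁,…,bₙ⟫`: its coefficients are all products
`b₁^{e₁}⋯bₙ^{eₙ}` with `0 ≤ eᵢ ≤ p-1`. -/
def pfister (p : ℕ) {F : Type*} [CommRing F] {n : ℕ} (b : Fin n → F) :
    (Fin n → Fin p) → F :=
  fun e => ∏ i, b i ^ (e i : ℕ)

/-- A form is a quasi-Pfister form if it is isometric to some `⟪b₁,…,bₙ⟫`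
with all `bᵢ ∈ F×`. -/
def IsQuasiPfister (p : ℕ) {F : Type*} [Field F] {ι : Type*} [Fintype ι] (a : ι → F) : Prop :=
  ∃ (n : ℕ) (b : Fin n → F), (∀ i, b i ≠ 0) ∧ Isometric p a (pfister p b)

/-- `a` is a quasi-Pfister neighbor of the form `π`: `c·a ⊆ π` for some `c ≠ 0`
and `p · dim a > dim π`. -/
def IsNeighborOf (p : ℕ) {F : Type*} [Field F] {ι κ : Type*} [Fintype ι] [Fintype κ]
    (a : ι → F) (π : κ → F) : Prop :=
  ∃ c : F, c ≠ 0 ∧ Subform p (fun i => c * a i) π ∧ p * Fintype.card ι > Fintype.card κ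

/-- `a` is a quasi-Pfister neighbor (of some quasi-Pfister form). -/
def IsQPNeighbor (p : ℕ) {F : Type*} [Field F] {ι : Type*} [Fintype ι] (a : ι → F) : Prop :=
  ∃ (n : ℕ) (b : Fin n → F), (∀ i, b i ≠ 0) ∧ IsNeighborOf p a (pfister p b)

/-- `a` is a quasi-Pfister neighbor of codimension one of some anisotropic
quasi-Pfister form: `dim π - dim a = 1`. -/
def IsQPNeighborCodimOne (p : ℕ) {F : Type*} [Field F] {ι : Type*} [Fintype ι]
    (a : ι → F) : Prop :=
  ∃ (n : ℕ) (b : Fin n → F), (∀ i, b i ≠ 0) ∧ Anisotropic p (pfister p b) ∧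
    IsNeighborOf p a (pfister p b) ∧ Fintype.card ι + 1 = p ^ n

/-- Tensor product of diagonal forms: coefficients `aᵢ · bⱼ`. -/
def tensor (p : ℕ) {F : Type*} [CommRing F] {ι κ : Type*}
    (a : ι → F) (b : κ → F) : ι × κ → F :=
  fun ik => a ik.1 * b ik.2

/-- The set `G_F(φ) = {x ∈ F× : xφ ≃ φ} ∪ {0}` of similarity factors. -/
def simFactors (p : ℕ) {F : Type*} [Field F] {ι : Type*} [Fintype ι] (a : ι → F) : Set F :=
  {x | x ≠ 0 ∧ Isometric p (fun i => x * a i) a} ∪ {0}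

/-- `b` is the anisotropic part of `a`: `b` is anisotropic and
`a ≃ b ⊥ (m × ⟨0⟩)` for some `m`. -/
def IsAnisotropicPart (p : ℕ) {F : Type*} [Field F] {ι κ : Type*} [Fintype ι] [Fintype κ]
    (a : ι → F) (b : κ → F) : Prop :=
  Anisotropic p b ∧ ∃ m : ℕ, Isometric p a (Sum.elim b fun _ : Fin m => (0 : F))

/-- `⟪c₁,…,cₘ⟫` is (a representative of) the norm form of `a`:
`N_F(a) = Fᵖ(c₁,…,cₘ)` and `ndeg_F(a) = pᵐ`. -/
def IsNormForm (p : ℕ) {F : Type*} [Field F] {ι : Type*} [Fintype ι] (a : ι → F)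
    {m : ℕ} (c : Fin m → F) : Prop :=
  normField p a = adjoin p (Set.range c) ∧ ndeg p a = p ^ m

end QLF


set_option linter.unusedSectionVars false
set_option maxHeartbeats 1000000

namespace QLF

open scoped BigOperators
open Submodule

section Twisted

variable (p : ℕ) [Fact p.Prime]

/-- Frobenius-twisted copy of `K`. -/
def Tw (_p : ℕ) (K : Type*) : Type _ := K

def tw {K : Type*} (y : K) : Tw p K := y

def untw {p : ℕ} {K : Type*} (y : Tw p K) : K := y

instance {K : Type*} [Field K] : AddCommGroup (Tw p K) := inferInstanceAs (AddCommGroup K)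

noncomputable instance {K : Type*} [Field K] [CharP K p] : Module K (Tw p K) :=
  letI : ExpChar K p := ExpChar.prime Fact.out
  Module.compHom K (frobenius K p)

variable {K : Type*} [Field K] [CharP K p]

lemma tw_smul (r y : K) : r • tw p y = tw p (r ^ p * y) := rfl

lemma tw_add (y z : K) : tw p (y + z) = tw p y + tw p z := rfl

lemma tw_sum {ι : Type*} (s : Finset ι) (f : ι → K) :
    tw p (∑ i ∈ s, f i) = ∑ i ∈ s, tw p (f i) := rfl

lemma tw_injective : Function.Injective (tw p (K := K)) := fun _ _ h => h

lemma untw_smul (r : K) (y : Tw p K) : untw (r • y) = r ^ p * untw y := rfl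

lemma tw_sum_smul {ι : Type*} [Fintype ι] (v c : ι → K) :
    ∑ i, v i • tw p (c i) = tw p (∑ i, v i ^ p * c i) := by
  simp only [tw_smul, tw_sum]

variable {ι : Type*} [Fintype ι]

/-- Evaluation of the form as a linear map into the twisted module. -/
noncomputable def evalTw (c : ι → K) : (ι → K) →ₗ[K] Tw p K where
  toFun v := tw p (∑ i, c i * v i ^ p)
  map_add' v w := by
    haveI : ExpChar K p := ExpChar.prime Fact.out
    rw [← tw_add]
    congr 1
    rw [← Finset.sum_add_distrib]
    refine Finset.sum_congr rfl fun i _ => ?_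
    rw [Pi.add_apply, add_pow_char, mul_add]
  map_smul' r v := by
    rw [RingHom.id_apply, tw_smul]
    congr 1
    rw [Finset.mul_sum]
    refine Finset.sum_congr rfl fun i _ => ?_
    rw [Pi.smul_apply, smul_eq_mul, mul_pow]
    ring

lemma evalTw_apply (c : ι → K) (v : ι → K) : evalTw p c v = tw p (eval p c v) := rfl

lemma range_evalTw (c : ι → K) :
    LinearMap.range (evalTw p c) = Submodule.span K (Set.range fun i => tw p (c i)) := by
  apply le_antisymm
  · rintro _ ⟨v, rfl⟩
    have hv : evalTw p c v = ∑ i, v i • tw p (c i) := by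
      rw [tw_sum_smul]
      show tw p _ = tw p _
      congr 1
      exact Finset.sum_congr rfl fun i _ => (mul_comm (c i) (v i ^ p) :)
    rw [hv]
    exact Submodule.sum_mem _ fun i _ =>
      Submodule.smul_mem _ _ (Submodule.subset_span ⟨i, rfl⟩)
  · rw [Submodule.span_le]
    rintro _ ⟨i, rfl⟩
    classical
    refine ⟨Pi.single i 1, ?_⟩
    show tw p (eval p c (Pi.single i 1)) = tw p (c i)
    congr 1
    rw [eval]
    have hp0 : p ≠ 0 := (Fact.out : p.Prime).ne_zero
    rw [Finset.sum_eq_single i]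
    · rw [Pi.single_eq_same, one_pow, mul_one]
    · intro j _ hj
      rw [Pi.single_eq_of_ne hj, zero_pow hp0, mul_zero]
    · intro h; exact absurd (Finset.mem_univ i) h

lemma zeroSubmodule_eq_ker (c : ι → K) :
    zeroSubmodule p c = LinearMap.ker (evalTw p c) := by
  ext v; exact Iff.rfl

lemma defect_add_finrank (c : ι → K) :
    defect p c + Module.finrank K (Submodule.span K (Set.range fun i => tw p (c i))) =
      Fintype.card ι := by
  have h := LinearMap.finrank_range_add_finrank_ker (evalTw p c)
  rw [range_evalTw] at h
  rw [defect, zeroSubmodule_eq_ker]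
  rw [Module.finrank_pi] at h
  omega

lemma defect_eq_zero_of_anisotropic {c : ι → K} (hc : Anisotropic p c) : defect p c = 0 := by
  have hbot : zeroSubmodule p c = ⊥ := by
    rw [Submodule.eq_bot_iff]
    intro v hv
    by_contra hne
    exact hc ⟨v, hne, hv⟩
  rw [defect, hbot, finrank_bot]

lemma finrank_span_of_anisotropic {c : ι → K} (hc : Anisotropic p c) :
    Module.finrank K (Submodule.span K (Set.range fun i => tw p (c i))) = Fintype.card ι := by
  have h := defect_add_finrank p c
  rw [defect_eq_zero_of_anisotropic p hc] at h
  omega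

lemma anisotropic_mul {x : K} (hx : x ≠ 0) {c : ι → K} (hc : Anisotropic p c) :
    Anisotropic p (fun i => x * c i) := by
  rintro ⟨v, hv, hev⟩
  refine hc ⟨v, hv, ?_⟩
  have h : eval p (fun i => x * c i) v = x * eval p c v := by
    rw [eval, eval, Finset.mul_sum]
    exact Finset.sum_congr rfl fun i _ => (mul_assoc _ _ _)
  rw [h] at hev
  exact (mul_eq_zero.mp hev).resolve_left hx

/-- Multiplication by `x` is a linear endomorphism of the twisted module. -/
noncomputable def mulTw (x : K) : Tw p K →ₗ[K] Tw p K where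
  toFun v := tw p (x * untw v)
  map_add' v w := by
    show tw p (x * (untw v + untw w)) = tw p (x * untw v) + tw p (x * untw w)
    rw [← tw_add]; congr 1; ring
  map_smul' r v := by
    show tw p (x * (r ^ p * untw v)) = r • tw p (x * untw v)
    rw [tw_smul]; congr 1; ring

lemma mulTw_tw (x y : K) : mulTw p x (tw p y) = tw p (x * y) := rfl

noncomputable def mulTwEquiv (x : K) (hx : x ≠ 0) : Tw p K ≃ₗ[K] Tw p K :=
  LinearEquiv.ofLinear (mulTw p x) (mulTw p x⁻¹)
    (by
      apply LinearMap.ext; intro v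
      show tw p (x * (x⁻¹ * untw v)) = v
      rw [← mul_assoc, mul_inv_cancel₀ hx, one_mul]; rfl)
    (by
      apply LinearMap.ext; intro v
      show tw p (x⁻¹ * (x * untw v)) = v
      rw [← mul_assoc, inv_mul_cancel₀ hx, one_mul]; rfl)

lemma mulTwEquiv_coe (x : K) (hx : x ≠ 0) :
    (mulTwEquiv p x hx : Tw p K →ₗ[K] Tw p K) = mulTw p x := rfl

/-- Isometric forms have equal twisted spans. -/
lemma span_eq_of_isometric {κ : Type*} [Fintype κ] {a : ι → K} {b : κ → K}
    (h : Isometric p a b) :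
    Submodule.span K (Set.range fun i => tw p (a i)) =
      Submodule.span K (Set.range fun j => tw p (b j)) := by
  obtain ⟨T, hT⟩ := h
  have hcomp : evalTw p a = (evalTw p b).comp (T : (ι → K) →ₗ[K] (κ → K)) := by
    apply LinearMap.ext; intro v
    show tw p (eval p a v) = tw p (eval p b (T v))
    rw [hT v]
  rw [← range_evalTw, ← range_evalTw, hcomp,
    LinearMap.range_comp_of_range_eq_top _ (LinearEquiv.range T)]

/-- Equal twisted spans give isometric forms (under anisotropy of the source). -/
lemma isometric_of_span_eq {κ : Type*} [Fintype κ] {a : ι → K} {b : κ → K}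
    (ha : Anisotropic p a) (hcard : Fintype.card ι = Fintype.card κ)
    (h : Submodule.span K (Set.range fun i => tw p (a i)) =
      Submodule.span K (Set.range fun j => tw p (b j))) :
    Isometric p a b := by
  haveI : ExpChar K p := ExpChar.prime Fact.out
  have hp0 : p ≠ 0 := (Fact.out : p.Prime).ne_zero
  have hmem : ∀ i, tw p (a i) ∈ Submodule.span K (Set.range fun j => tw p (b j)) :=
    fun i => h ▸ Submodule.subset_span ⟨i, rfl⟩
  choose d hd using fun i => (mem_span_range_iff_exists_fun K).mp (hmem i)
  have hdF : ∀ i, ∑ j, (d i j) ^ p * b j = a i := by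
    intro i
    have := hd i
    rw [tw_sum_smul] at this
    exact tw_injective p this
  let T : (ι → K) →ₗ[K] (κ → K) :=
    { toFun := fun v j => ∑ i, d i j * v i
      map_add' := by
        intro v w; funext j
        simp only [Pi.add_apply, mul_add, Finset.sum_add_distrib]
      map_smul' := by
        intro r v; funext j
        simp only [Pi.smul_apply, smul_eq_mul, RingHom.id_apply, Finset.mul_sum]
        exact Finset.sum_congr rfl fun i _ => by ring }
  have hTeval : ∀ v, eval p a v = eval p b (T v) := by
    intro v
    have expand : ∀ j, b j * (∑ i, d i j * v i) ^ p = ∑ i, (d i j) ^ p * b j * v i ^ p := by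
      intro j
      rw [sum_pow_char, Finset.mul_sum]
      exact Finset.sum_congr rfl fun i _ => by rw [mul_pow]; ring
    calc eval p a v = ∑ i, (∑ j, (d i j) ^ p * b j) * v i ^ p := by
          rw [eval]; exact Finset.sum_congr rfl fun i _ => by rw [hdF i]
      _ = ∑ i, ∑ j, (d i j) ^ p * b j * v i ^ p := by
          exact Finset.sum_congr rfl fun i _ => by rw [Finset.sum_mul]
      _ = ∑ j, ∑ i, (d i j) ^ p * b j * v i ^ p := Finset.sum_comm
      _ = ∑ j, b j * (∑ i, d i j * v i) ^ p := by
          exact Finset.sum_congr rfl fun j _ => (expand j).symm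
      _ = eval p b (T v) := rfl
  have hinj : Function.Injective T := by
    rw [← LinearMap.ker_eq_bot, Submodule.eq_bot_iff]
    intro v hv
    by_contra hne
    refine ha ⟨v, hne, ?_⟩
    rw [hTeval v, (LinearMap.mem_ker.mp hv : T v = 0)]
    simp [eval, zero_pow hp0]
  have hsurj : Function.Surjective T :=
    (LinearMap.injective_iff_surjective_of_finrank_eq_finrank
      (by rw [Module.finrank_pi, Module.finrank_pi, hcard])).mp hinj
  exact ⟨LinearEquiv.ofBijective T ⟨hinj, hsurj⟩, fun v => hTeval v⟩

end Twisted

end QLF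

namespace QLF

section Main

open Submodule

variable (p : ℕ) [Fact p.Prime] {F : Type*} [Field F] [CharP F p]

lemma xpow_mem_of_step (x : F) (S : Submodule F (Tw p F))
    (hstep : ∀ z : F, tw p z ∈ S → tw p (x * z) ∈ S) :
    ∀ (n : ℕ) (z : F), tw p z ∈ S → tw p (x ^ n * z) ∈ S := by
  intro n
  induction n with
  | zero => intro z hz; rwa [pow_zero, one_mul]
  | succ n ih =>
    intro z hz
    have h := hstep _ (ih z hz)
    rwa [← mul_assoc, ← pow_succ'] at h

lemma step_mem {κ : Type*} [Fintype κ] (x : F) (g : κ → F) (z : F)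
    (hz : tw p z ∈ Submodule.span F
      (Set.range fun kj : Fin p × κ => tw p (x ^ (kj.1 : ℕ) * g kj.2))) :
    tw p (x * z) ∈ Submodule.span F
      (Set.range fun kj : Fin p × κ => tw p (x ^ (kj.1 : ℕ) * g kj.2)) := by
  have hp : p.Prime := Fact.out
  haveI : NeZero p := ⟨hp.ne_zero⟩
  set S := Submodule.span F (Set.range fun kj : Fin p × κ => tw p (x ^ (kj.1 : ℕ) * g kj.2))
    with hS
  have hmap : Submodule.map (mulTw p x) S ≤ S := by
    rw [hS, Submodule.map_span, Submodule.span_le]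
    rintro _ ⟨_, ⟨⟨k, j⟩, rfl⟩, rfl⟩
    show mulTw p x (tw p (x ^ (k : ℕ) * g j)) ∈ S
    rw [mulTw_tw, ← mul_assoc, ← pow_succ']
    rcases lt_or_ge ((k : ℕ) + 1) p with hlt | hge
    · exact Submodule.subset_span ⟨(⟨(k : ℕ) + 1, hlt⟩, j), rfl⟩
    · have hkp : (k : ℕ) + 1 = p := le_antisymm k.isLt hge
      rw [hkp]
      have h0 : tw p (x ^ p * g j) = x • tw p (x ^ ((0 : Fin p) : ℕ) * g j) := by
        rw [tw_smul]
        congr 1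
        simp
      rw [h0]
      exact Submodule.smul_mem _ _ (Submodule.subset_span ⟨((0 : Fin p), j), rfl⟩)
  exact hmap ⟨_, hz, rfl⟩

lemma iso_of_pow {ι : Type*} [Fintype ι] (y : F) (hy : y ≠ 0) (a : ι → F)
    (ha : Anisotropic p a) : Isometric p (fun i => y ^ p * a i) a := by
  apply isometric_of_span_eq p (anisotropic_mul p (pow_ne_zero p hy) ha) rfl
  apply le_antisymm <;> rw [Submodule.span_le] <;> rintro _ ⟨i, rfl⟩
  · have h : tw p (y ^ p * a i) = y • tw p (a i) := by rw [tw_smul]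
    simp only [h]
    exact Submodule.smul_mem _ _ (Submodule.subset_span ⟨i, rfl⟩)
  · have h : tw p (a i) = y⁻¹ • tw p (y ^ p * a i) := by
      rw [tw_smul, ← mul_assoc, ← mul_pow, inv_mul_cancel₀ hy, one_pow, one_mul]
    simp only [h]
    exact Submodule.smul_mem _ _ (Submodule.subset_span ⟨i, rfl⟩)

/-- Characterization: `x·a ≃ a` iff the twisted span of `{x^k a_i}` has full rank. -/
lemma iso_iff_finrankW {ι : Type*} [Fintype ι] (x : F) (hx : x ≠ 0) (a : ι → F)
    (ha : Anisotropic p a) :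
    Isometric p (fun i => x * a i) a ↔
      Module.finrank F (Submodule.span F
        (Set.range fun kj : Fin p × ι => tw p (x ^ (kj.1 : ℕ) * a kj.2))) = Fintype.card ι := by
  have hp : p.Prime := Fact.out
  haveI : NeZero p := ⟨hp.ne_zero⟩
  set V := Submodule.span F (Set.range fun i => tw p (a i)) with hV
  set Vx := Submodule.span F (Set.range fun i => tw p (x * a i)) with hVx
  set W := Submodule.span F (Set.range fun kj : Fin p × ι => tw p (x ^ (kj.1 : ℕ) * a kj.2))
    with hW
  haveI : FiniteDimensional F V := FiniteDimensional.span_of_finite F (Set.finite_range _)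
  haveI : FiniteDimensional F W := FiniteDimensional.span_of_finite F (Set.finite_range _)
  have hfV : Module.finrank F V = Fintype.card ι := finrank_span_of_anisotropic p ha
  have hmapx : Submodule.map (mulTw p x) V = Vx := by
    rw [hV, Submodule.map_span, ← Set.range_comp]
    rfl
  have hVleW : V ≤ W := by
    rw [hV, Submodule.span_le]
    rintro _ ⟨i, rfl⟩
    have h : tw p (a i) = tw p (x ^ ((0 : Fin p) : ℕ) * a i) := by
      rw [Fin.val_zero, pow_zero, one_mul]
    simp only [h]
    exact Submodule.subset_span ⟨((0 : Fin p), i), rfl⟩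
  constructor
  · intro hiso
    have hspan : Vx = V := span_eq_of_isometric p hiso
    have hstep : ∀ z : F, tw p z ∈ V → tw p (x * z) ∈ V := by
      intro z hz
      have h : mulTw p x (tw p z) ∈ Submodule.map (mulTw p x) V := Submodule.mem_map_of_mem hz
      rw [hmapx, hspan] at h
      exact h
    have hWleV : W ≤ V := by
      rw [hW, Submodule.span_le]
      rintro _ ⟨⟨k, i⟩, rfl⟩
      exact xpow_mem_of_step p x V hstep (k : ℕ) (a i) (Submodule.subset_span ⟨i, rfl⟩)
    rw [le_antisymm hWleV hVleW, hfV]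
  · intro hfW
    have hWV : V = W := Submodule.eq_of_le_of_finrank_le hVleW (by rw [hfW, hfV])
    have hone : ((1 : Fin p) : ℕ) = 1 := by
      rw [Fin.val_one']
      exact Nat.mod_eq_of_lt hp.one_lt
    have hVxleV : Vx ≤ V := by
      rw [hVx, Submodule.span_le]
      rintro _ ⟨i, rfl⟩
      rw [hWV]
      have h1 : tw p (x * a i) = tw p (x ^ ((1 : Fin p) : ℕ) * a i) := by
        rw [hone, pow_one]
      simp only [h1]
      exact Submodule.subset_span ⟨((1 : Fin p), i), rfl⟩
    have hfVx : Module.finrank F Vx = Module.finrank F V := by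
      rw [← hmapx]
      exact LinearEquiv.finrank_map_eq (mulTwEquiv p x hx) V
    have hVxV : Vx = V := Submodule.eq_of_le_of_finrank_le hVxleV (le_of_eq hfVx.symm)
    exact isometric_of_span_eq p (anisotropic_mul p hx ha) rfl hVxV

variable {E : Type*} [Field E] [CharP E p] [Algebra F E]

lemma pow_p_eq (x : F) (α : E) (hα : α ^ p = algebraMap F E x)
    (b : Module.Basis (Fin p) F E) (hb : ∀ k : Fin p, b k = α ^ (k : ℕ)) (e : E) :
    e ^ p = algebraMap F E (∑ k : Fin p, (b.repr e k) ^ p * x ^ (k : ℕ)) := by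
  haveI : ExpChar E p := ExpChar.prime Fact.out
  conv_lhs => rw [← b.sum_repr e]
  rw [sum_pow_char, map_sum]
  refine Finset.sum_congr rfl fun k _ => ?_
  have h1 : (α ^ (k : ℕ)) ^ p = algebraMap F E (x ^ (k : ℕ)) := by
    rw [← pow_mul, mul_comm (k : ℕ) p, pow_mul, hα, ← map_pow]
  rw [hb k, smul_pow, h1, Algebra.smul_def, ← map_mul]

lemma sub_lemma {κ : Type*} [Fintype κ] (x : F) (α : E) (hα : α ^ p = algebraMap F E x)
    (b : Module.Basis (Fin p) F E) (hb : ∀ k : Fin p, b k = α ^ (k : ℕ))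
    (g : κ → F) (z : F)
    (hz : tw p (algebraMap F E z) ∈
      Submodule.span E (Set.range fun j => tw p (algebraMap F E (g j)))) :
    tw p z ∈ Submodule.span F
      (Set.range fun kj : Fin p × κ => tw p (x ^ (kj.1 : ℕ) * g kj.2)) := by
  obtain ⟨e, he⟩ := (mem_span_range_iff_exists_fun E).mp hz
  rw [tw_sum_smul] at he
  have heF : ∑ j, e j ^ p * algebraMap F E (g j) = algebraMap F E z := tw_injective p he
  have hz' : z = ∑ j, ∑ k : Fin p, (b.repr (e j) k) ^ p * (x ^ (k : ℕ) * g j) := by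
    apply (algebraMap F E).injective
    rw [← heF, map_sum]
    refine Finset.sum_congr rfl fun j _ => ?_
    rw [pow_p_eq p x α hα b hb (e j), ← map_mul]
    congr 1
    rw [Finset.sum_mul]
    exact Finset.sum_congr rfl fun k _ => mul_assoc _ _ _
  rw [hz', tw_sum]
  refine Submodule.sum_mem _ fun j _ => ?_
  rw [tw_sum]
  refine Submodule.sum_mem _ fun k _ => ?_
  have h : tw p (b.repr (e j) k ^ p * (x ^ (k : ℕ) * g j)) =
      (b.repr (e j) k) • tw p (x ^ (k : ℕ) * g j) := (tw_smul p _ _).symm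
  rw [h]
  exact Submodule.smul_mem _ _ (Submodule.subset_span ⟨(k, j), rfl⟩)

/-- The key dimension count: `dim_F W = p * dim_E U`. -/
lemma key {ι : Type*} [Fintype ι] (x : F) (α : E) (hα : α ^ p = algebraMap F E x)
    (b : Module.Basis (Fin p) F E) (hb : ∀ k : Fin p, b k = α ^ (k : ℕ)) (a : ι → F) :
    Module.finrank F (Submodule.span F
        (Set.range fun kj : Fin p × ι => tw p (x ^ (kj.1 : ℕ) * a kj.2))) =
      p * Module.finrank E (Submodule.span E
        (Set.range fun i => tw p (algebraMap F E (a i)))) := by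
  haveI : ExpChar E p := ExpChar.prime Fact.out
  haveI : FiniteDimensional E
      (Submodule.span E (Set.range fun i => tw p (algebraMap F E (a i)))) :=
    FiniteDimensional.span_of_finite E (Set.finite_range _)
  have hrange : ∀ z : Tw p E,
      z ∈ Submodule.span E (Set.range fun i => tw p (algebraMap F E (a i))) →
      ∃ y : F, tw p (algebraMap F E y) = z := by
    intro z hz
    refine Submodule.span_induction (fun w hw => ?_) ⟨0, by rw [map_zero]; rfl⟩
      (fun y w _ _ hy' hw' => ?_) (fun e w _ hw' => ?_) hz
    · obtain ⟨i, rfl⟩ := hw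
      exact ⟨a i, rfl⟩
    · obtain ⟨y1, rfl⟩ := hy'
      obtain ⟨y2, rfl⟩ := hw'
      exact ⟨y1 + y2, by rw [map_add]; rfl⟩
    · obtain ⟨y, rfl⟩ := hw'
      refine ⟨(∑ k : Fin p, (b.repr e k) ^ p * x ^ (k : ℕ)) * y, ?_⟩
      rw [tw_smul, map_mul, ← pow_p_eq p x α hα b hb e]
  let u : Module.Basis (Fin (Module.finrank E
      (Submodule.span E (Set.range fun i => tw p (algebraMap F E (a i)))))) E
      (Submodule.span E (Set.range fun i => tw p (algebraMap F E (a i)))) :=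
    Module.finBasis E _
  have hu : ∀ j, ((u j : Tw p E)) ∈
      Submodule.span E (Set.range fun i => tw p (algebraMap F E (a i))) := fun j => (u j).2
  choose w hw using fun j => hrange (u j) (hu j)
  have hUspan : Submodule.span E (Set.range fun j => tw p (algebraMap F E (w j))) =
      Submodule.span E (Set.range fun i => tw p (algebraMap F E (a i))) := by
    have h1 : (fun j => tw p (algebraMap F E (w j))) = fun j => ((u j : Tw p E)) := funext hw
    rw [h1]
    have h2 := congrArg (Submodule.map (Submodule.span E
      (Set.range fun i => tw p (algebraMap F E (a i)))).subtype) u.span_eq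
    rwa [Submodule.map_span, ← Set.range_comp, Submodule.map_top, Submodule.range_subtype] at h2
  have huind : LinearIndependent E (fun j => ((u j : Tw p E))) :=
    u.linearIndependent.map' _ (Submodule.ker_subtype _)
  have hWeq : Submodule.span F (Set.range fun kj : Fin p × ι => tw p (x ^ (kj.1 : ℕ) * a kj.2)) =
      Submodule.span F (Set.range fun kj : Fin p × Fin _ => tw p (x ^ (kj.1 : ℕ) * w kj.2)) := by
    apply le_antisymm <;> rw [Submodule.span_le] <;> rintro _ ⟨⟨k, i⟩, rfl⟩
    · apply xpow_mem_of_step p x _ (fun z hz => step_mem p x w z hz) (k : ℕ) (a i)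
      apply sub_lemma p x α hα b hb w (a i)
      rw [hUspan]
      exact Submodule.subset_span ⟨i, rfl⟩
    · apply xpow_mem_of_step p x _ (fun z hz => step_mem p x a z hz) (k : ℕ) (w i)
      apply sub_lemma p x α hα b hb a (w i)
      rw [hw i]
      exact hu i
  have hind : LinearIndependent F
      (fun kj : Fin p × Fin _ => tw p (x ^ (kj.1 : ℕ) * w kj.2)) := by
    rw [Fintype.linearIndependent_iff]
    intro c hc
    rw [tw_sum_smul] at hc
    have hcF : (∑ kj : Fin p × Fin _, (c kj) ^ p * (x ^ (kj.1 : ℕ) * w kj.2)) = 0 :=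
      tw_injective p hc
    have hep : ∀ j, (∑ k : Fin p, c (k, j) • α ^ (k : ℕ)) ^ p =
        algebraMap F E (∑ k : Fin p, c (k, j) ^ p * x ^ (k : ℕ)) := by
      intro j
      rw [sum_pow_char, map_sum]
      refine Finset.sum_congr rfl fun k _ => ?_
      have h1 : (α ^ (k : ℕ)) ^ p = algebraMap F E (x ^ (k : ℕ)) := by
        rw [← pow_mul, mul_comm (k : ℕ) p, pow_mul, hα, ← map_pow]
      rw [smul_pow, h1, Algebra.smul_def, ← map_mul]
    have heu : ∑ j, (∑ k : Fin p, c (k, j) • α ^ (k : ℕ)) • ((u j : Tw p E)) = 0 := by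
      simp only [← hw]
      rw [tw_sum_smul]
      have hsum : (∑ j, (∑ k : Fin p, c (k, j) • α ^ (k : ℕ)) ^ p * algebraMap F E (w j)) = 0 := by
        have h3 : ∀ j, (∑ k : Fin p, c (k, j) • α ^ (k : ℕ)) ^ p * algebraMap F E (w j) =
            algebraMap F E (∑ k : Fin p, c (k, j) ^ p * (x ^ (k : ℕ) * w j)) := by
          intro j
          rw [hep j, ← map_mul]
          congr 1
          rw [Finset.sum_mul]
          exact Finset.sum_congr rfl fun k _ => mul_assoc _ _ _
        rw [Finset.sum_congr rfl fun j _ => h3 j, ← map_sum]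
        rw [show (∑ j, ∑ k : Fin p, c (k, j) ^ p * (x ^ (k : ℕ) * w j)) = 0 from ?_, map_zero]
        rw [← hcF, Fintype.sum_prod_type]
        exact Finset.sum_comm
      rw [hsum]
      rfl
    have he0 := Fintype.linearIndependent_iff.mp huind _ heu
    intro kj
    obtain ⟨k, j⟩ := kj
    have hbj : ∑ k' : Fin p, c (k', j) • b k' = 0 := by
      rw [Finset.sum_congr rfl fun k' (_ : k' ∈ Finset.univ) => by rw [hb k']]
      exact he0 j
    exact Fintype.linearIndependent_iff.mp b.linearIndependent (fun k' => c (k', j)) hbj k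
  rw [hWeq, finrank_span_eq_card hind, Fintype.card_prod, Fintype.card_fin, Fintype.card_fin]

end Main

end QLF

namespace QLF

section Transfer

open Polynomial Submodule

variable (p : ℕ) [Fact p.Prime] {F : Type u} [Field F] [CharP F p]

lemma transfer {ι κ : Type*} [Fintype ι] [Fintype κ] (φ : ι → F) (ψ : κ → F)
    (hφ : Anisotropic p φ) (hψ : Anisotropic p ψ)
    (hcard : Fintype.card ι = Fintype.card κ)
    (hdef : ∀ (E : Type u) [Field E] [CharP E p] (f : F →+* E) (α : E),
      α ^ p ∈ Set.range ⇑f → Subfield.closure (insert α (Set.range ⇑f)) = ⊤ →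
      defect p (⇑f ∘ φ) = defect p (⇑f ∘ ψ))
    (z : F) (hz : z ≠ 0) (hiso : Isometric p (fun i => z * φ i) φ) :
    Isometric p (fun j => z * ψ j) ψ := by
  have hp : p.Prime := Fact.out
  by_cases hzp : ∃ y : F, y ^ p = z
  · obtain ⟨y, rfl⟩ := hzp
    have hy : y ≠ 0 := by
      rintro rfl
      exact hz (zero_pow hp.ne_zero)
    exact iso_of_pow p y hy ψ hψ
  · push_neg at hzp
    set q : F[X] := X ^ p - C z with hq
    have hirr : Irreducible q := X_pow_sub_C_irreducible_of_prime hp hzp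
    haveI : Fact (Irreducible q) := ⟨hirr⟩
    set E := AdjoinRoot q with hE
    haveI : CharP E p := charP_of_injective_ringHom (algebraMap F E).injective p
    set α : E := AdjoinRoot.root q with hαdef
    have hα : α ^ p = algebraMap F E z := by
      rw [AdjoinRoot.algebraMap_eq]
      exact root_X_pow_sub_C_pow p z
    have hmonic : q.Monic := by
      rw [hq]; exact monic_X_pow_sub_C z hp.ne_zero
    have hdeg : q.natDegree = p := by
      rw [hq]; exact natDegree_X_pow_sub_C
    let pb := AdjoinRoot.powerBasis' hmonic
    let b : Module.Basis (Fin p) F E := pb.basis.reindex (finCongr hdeg)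
    have hb : ∀ k : Fin p, b k = α ^ (k : ℕ) := by
      intro k
      rw [Module.Basis.reindex_apply, PowerBasis.basis_eq_pow, AdjoinRoot.powerBasis'_gen, hαdef]
      rfl
    have hmem : α ^ p ∈ Set.range ⇑(algebraMap F E) := ⟨z, hα.symm⟩
    have hclosure : Subfield.closure (insert α (Set.range ⇑(algebraMap F E))) = ⊤ := by
      refine eq_top_iff.mpr fun e _ => ?_
      have h1 : e ∈ Subring.closure (Set.range ⇑(algebraMap F E) ∪ {α}) := by
        have h2 : e ∈ (Algebra.adjoin F ({α} : Set E)).toSubring := by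
          rw [hαdef, AdjoinRoot.adjoinRoot_eq_top]
          exact Subalgebra.mem_toSubring.mpr Algebra.mem_top
        rwa [Algebra.adjoin_eq_ring_closure] at h2
      have h3 : Subring.closure (Set.range ⇑(algebraMap F E) ∪ {α}) ≤
          (Subfield.closure (insert α (Set.range ⇑(algebraMap F E)))).toSubring := by
        rw [Subring.closure_le]
        intro y hy
        rcases hy with hy | hy
        · exact Subfield.subset_closure (Set.mem_insert_of_mem _ hy)
        · rw [Set.mem_singleton_iff] at hy
          subst hy
          exact Subfield.subset_closure (Set.mem_insert _ _)
      exact h3 h1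
    have hd' : defect p (fun i => algebraMap F E (φ i)) =
        defect p (fun j => algebraMap F E (ψ j)) :=
      hdef E (algebraMap F E) α hmem hclosure
    have d1 := defect_add_finrank p (fun i => algebraMap F E (φ i))
    have d2 := defect_add_finrank p (fun j => algebraMap F E (ψ j))
    have k1 := key p z α hα b hb φ
    have k2 := key p z α hα b hb ψ
    have hUeq : Module.finrank E (Submodule.span E
          (Set.range fun i => tw p (algebraMap F E (φ i)))) =
        Module.finrank E (Submodule.span E
          (Set.range fun j => tw p (algebraMap F E (ψ j)))) := by
      omega
    rw [iso_iff_finrankW p z hz ψ hψ, k2, ← hUeq, ← k1, ← hcard]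
    exact (iso_iff_finrankW p z hz φ hφ).mp hiso

end Transfer

end QLF

/-- Weakly Vishik equivalent anisotropic quasilinear `p`-forms
have exactly the same similarity factors: `G_F(φ) = G_F(ψ)`. -/
theorem stmt_1 (p : ℕ) [Fact p.Prime] {F : Type u} [Field F] [CharP F p]
    {n m : ℕ} (φ : Fin n → F) (ψ : Fin m → F)
    (hφ : QLF.Anisotropic p φ) (hψ : QLF.Anisotropic p ψ)
    (h : QLF.WeakVishikEquiv p φ ψ) :
    QLF.simFactors p φ = QLF.simFactors p ψ := by
  obtain ⟨hcard, hdef⟩ := h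
  ext z
  simp only [QLF.simFactors, Set.mem_union, Set.mem_setOf_eq, Set.mem_singleton_iff]
  constructor
  · rintro (⟨hz, hiso⟩ | rfl)
    · exact Or.inl ⟨hz, QLF.transfer p φ ψ hφ hψ hcard hdef z hz hiso⟩
    · exact Or.inr rfl
  · rintro (⟨hz, hiso⟩ | rfl)
    · exact Or.inl ⟨hz, QLF.transfer p ψ φ hψ hφ hcard.symm
        (fun E _ _ f α h1 h2 => (hdef E f α h1 h2).symm) z hz hiso⟩
    · exact Or.inr rfl
end

section
/- Let F be a field of characteristic 2 and let φ, ψ be anisotropic totally singular quadratic forms over F that are weakly Vishik equivalent. Assume that φ is a special quasi-Pfister neighbor given by a triple (π, b, σ), and that cπ ⊆ ψ for some c ∈ F×. Then ψ is a special quasi-Pfister neighbor given by a triple (π, b, ρ) for some totally singular quadratic form ρ over F with ρ ⊆ π, and moreover ρ and σ are weakly Vishik equivalent. -/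
/-!
Diagonal quasilinear `p`-forms over a field `F` of characteristic `p`,
following Hoffmann and Zemková. A form of dimension `n` is recorded by its
coefficient tuple `a : ι → F` (for a finite index type `ι`), the form being
`x ↦ ∑ i, a i * (x i)^p`.
-/

universe u

set_option linter.unusedSectionVars false
set_option linter.unusedVariables false
set_option linter.unreachableTactic false
set_option linter.unusedTactic false
set_option linter.unnecessarySeqFocus false
set_option maxHeartbeats 1000000
set_option synthInstance.maxHeartbeats 400000

namespace QLFAux
open Submodule Set Module


open Submodule Set Module

variable {F : Type u} [Field F] [CharP F 2]

/-- The subfield `F²(t) = {u² + t v²}` of `F`. -/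
def Kt (t : F) : Subfield F where
  carrier := {x | ∃ u v : F, x = u ^ 2 + t * v ^ 2}
  zero_mem' := ⟨0, 0, by ring⟩
  one_mem' := ⟨1, 0, by ring⟩
  add_mem' := by
    rintro x y ⟨u, v, rfl⟩ ⟨u', v', rfl⟩
    exact ⟨u + u', v + v', by rw [CharTwo.add_sq, CharTwo.add_sq]; ring⟩
  mul_mem' := by
    rintro x y ⟨u, v, rfl⟩ ⟨u', v', rfl⟩
    exact ⟨u * u' + t * (v * v'), u * v' + u' * v, by
      rw [CharTwo.add_sq, CharTwo.add_sq]; ring⟩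
  neg_mem' := by
    rintro x ⟨u, v, rfl⟩
    exact ⟨u, v, by rw [CharTwo.neg_eq]⟩
  inv_mem' := by
    rintro x ⟨u, v, rfl⟩
    by_cases h : u ^ 2 + t * v ^ 2 = 0
    · exact ⟨0, 0, by rw [h]; simp⟩
    · refine ⟨u * (u ^ 2 + t * v ^ 2)⁻¹, v * (u ^ 2 + t * v ^ 2)⁻¹, ?_⟩
      field_simp
  
theorem sq_mem_Kt (t x : F) : x ^ 2 ∈ Kt t := ⟨x, 0, by ring⟩

theorem mem_Kt_self (t : F) : t ∈ Kt t := ⟨0, 1, by ring⟩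

theorem smul_Kt {t : F} (k : Kt t) (x : F) : k • x = (k : F) * x := rfl

theorem mem_K_iff {x : F} : x ∈ Kt (0 : F) ↔ ∃ u : F, x = u ^ 2 := by
  constructor
  · rintro ⟨u, v, rfl⟩; exact ⟨u, by ring⟩
  · rintro ⟨u, rfl⟩; exact ⟨u, 0, by ring⟩

theorem K_le_Kt (t : F) : Kt (0 : F) ≤ Kt t := by
  rintro x hx
  obtain ⟨u, rfl⟩ := mem_K_iff.mp hx
  exact sq_mem_Kt t u

theorem eval_def {ι : Type*} [Fintype ι] (g : ι → F) (x : ι → F) :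
    QLF.eval 2 g x = ∑ i, g i * x i ^ 2 := rfl

theorem eval_single {ι : Type*} [Fintype ι] [DecidableEq ι] (g : ι → F) (i : ι) :
    QLF.eval 2 g (Pi.single i 1) = g i := by
  rw [eval_def, Finset.sum_eq_single i]
  · simp
  · intro j _ hj; simp [Pi.single_apply, hj]
  · intro hi; exact absurd (Finset.mem_univ i) hi

theorem eval_zero {ι : Type*} [Fintype ι] (g : ι → F) : QLF.eval 2 g 0 = 0 := by
  simp [eval_def]



section Forms

variable {F : Type u} [Field F] [CharP F 2]
variable {ι κ : Type*} [Fintype ι] [Fintype κ]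

theorem eval_smul_coeff (c : F) (g : ι → F) (x : ι → F) :
    QLF.eval 2 (fun i => c * g i) x = c * QLF.eval 2 g x := by
  rw [eval_def, eval_def, Finset.mul_sum]
  exact Finset.sum_congr rfl fun i _ => by ring

theorem anisotropic_smul_iff {c : F} (hc : c ≠ 0) (g : ι → F) :
    QLF.Anisotropic 2 (fun i => c * g i) ↔ QLF.Anisotropic 2 g := by
  unfold QLF.Anisotropic QLF.Isotropic
  constructor
  · intro h ⟨x, hx, he⟩
    exact h ⟨x, hx, by rw [eval_smul_coeff, he, mul_zero]⟩
  · intro h ⟨x, hx, he⟩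
    rw [eval_smul_coeff] at he
    exact h ⟨x, hx, (mul_eq_zero.mp he).resolve_left hc⟩

theorem anisotropic_of_subform {g₁ : ι → F} {g₂ : κ → F}
    (h : QLF.Subform 2 g₁ g₂) (h₂ : QLF.Anisotropic 2 g₂) : QLF.Anisotropic 2 g₁ := by
  obtain ⟨T, hTi, hT⟩ := h
  rintro ⟨x, hx, he⟩
  refine h₂ ⟨T x, fun h0 => hx (hTi (by rw [h0, map_zero])), ?_⟩
  rw [← hT, he]

theorem anisotropic_iff_linearIndependent (g : ι → F) :
    QLF.Anisotropic 2 g ↔ LinearIndependent (Kt (0 : F)) g := by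
  constructor
  · intro han
    rw [Fintype.linearIndependent_iff]
    intro k hk
    have hu : ∀ i, ∃ u : F, (k i : F) = u ^ 2 := fun i => mem_K_iff.mp (k i).2
    choose u hu using hu
    have hx : QLF.eval 2 g u = 0 := by
      rw [eval_def, ← hk]
      exact Finset.sum_congr rfl fun i _ => by rw [smul_Kt, hu, mul_comm]
    have hu0 : u = 0 := by
      by_contra h0
      exact han ⟨u, h0, hx⟩
    intro i
    ext
    rw [hu, show u i = 0 from congrFun hu0 i]
    simp
  · rintro hli ⟨x, hx, he⟩
    have := Fintype.linearIndependent_iff.mp hli (fun i => ⟨x i ^ 2, sq_mem_Kt 0 (x i)⟩) ?_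
    · refine hx (funext fun i => ?_)
      have := this i
      rw [Subtype.ext_iff] at this
      exact pow_eq_zero_iff (n := 2) (by norm_num) |>.mp this
    · rw [← he, eval_def]
      exact Finset.sum_congr rfl fun i _ => by rw [smul_Kt, mul_comm]

theorem subform_coeffs {g₁ : ι → F} {g₂ : κ → F} (h : QLF.Subform 2 g₁ g₂) (i : ι) :
    ∃ M : κ → F, g₁ i = ∑ j, M j ^ 2 * g₂ j := by
  classical
  obtain ⟨T, -, hT⟩ := h
  refine ⟨T (Pi.single i 1), ?_⟩
  have h1 := hT (Pi.single i 1)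
  rw [eval_single] at h1
  rw [h1, eval_def]
  exact Finset.sum_congr rfl fun j _ => by ring

theorem isometric_subform {g₁ : ι → F} {g₂ : κ → F} (h : QLF.Isometric 2 g₁ g₂) :
    QLF.Subform 2 g₁ g₂ := by
  obtain ⟨T, hT⟩ := h
  exact ⟨T.toLinearMap, T.injective, hT⟩

theorem isometric_symm {g₁ : ι → F} {g₂ : κ → F} (h : QLF.Isometric 2 g₁ g₂) :
    QLF.Isometric 2 g₂ g₁ := by
  obtain ⟨T, hT⟩ := h
  refine ⟨T.symm, fun y => ?_⟩
  rw [hT (T.symm y), T.apply_symm_apply]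

theorem subform_span_le {g₁ : ι → F} {g₂ : κ → F} (L : Subfield F)
    (hL : ∀ x : F, x ^ 2 ∈ L) (h : QLF.Subform 2 g₁ g₂) :
    span L (range g₁) ≤ span L (range g₂) := by
  rw [span_le]
  rintro _ ⟨i, rfl⟩
  obtain ⟨M, hM⟩ := subform_coeffs h i
  rw [hM]
  exact sum_mem fun j _ =>
    smul_mem _ (⟨M j ^ 2, hL (M j)⟩ : L) (subset_span ⟨j, rfl⟩)

theorem isometric_span_eq {g₁ : ι → F} {g₂ : κ → F} (L : Subfield F)
    (hL : ∀ x : F, x ^ 2 ∈ L) (h : QLF.Isometric 2 g₁ g₂) :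
    span L (range g₁) = span L (range g₂) :=
  le_antisymm (subform_span_le L hL (isometric_subform h))
    (subform_span_le L hL (isometric_subform (isometric_symm h)))

/-- Construction of the comparison map from span membership of coefficients. -/
theorem exists_comparison {g₁ : ι → F} {g₂ : κ → F}
    (hmem : ∀ i, g₁ i ∈ span (Kt (0 : F)) (range g₂)) :
    ∃ T : (ι → F) →ₗ[F] (κ → F), ∀ x, QLF.eval 2 g₁ x = QLF.eval 2 g₂ (T x) := by
  have hk : ∀ i, ∃ k : κ → Kt (0 : F), ∑ j, k j • g₂ j = g₁ i := by
    intro i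
    exact (mem_span_range_iff_exists_fun _).mp (hmem i)
  choose k hk using hk
  have hm : ∀ i j, ∃ m : F, (k i j : F) = m ^ 2 := fun i j => mem_K_iff.mp (k i j).2
  choose m hm using hm
  refine ⟨{ toFun := fun x j => ∑ i, m i j * x i
            map_add' := by
              intro x y; funext j
              simp only [Pi.add_apply, mul_add]
              exact Finset.sum_add_distrib
            map_smul' := by
              intro c x; funext j
              simp only [Pi.smul_apply, smul_eq_mul, RingHom.id_apply, Finset.mul_sum]
              exact Finset.sum_congr rfl fun i _ => by ring }, fun x => ?_⟩
  simp only [eval_def, LinearMap.coe_mk, AddHom.coe_mk]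
  have key : ∀ j, g₂ j * (∑ i, m i j * x i) ^ 2 = ∑ i, m i j ^ 2 * g₂ j * x i ^ 2 := by
    intro j
    rw [CharTwo.sum_sq, Finset.mul_sum]
    exact Finset.sum_congr rfl fun i _ => by ring
  rw [Finset.sum_congr rfl fun j _ => key j, Finset.sum_comm]
  refine Finset.sum_congr rfl fun i _ => ?_
  have : g₁ i = ∑ j, m i j ^ 2 * g₂ j := by
    rw [← hk i]
    exact Finset.sum_congr rfl fun j _ => by rw [smul_Kt, hm]
  rw [this, Finset.sum_mul]
  try exact Finset.sum_congr rfl fun j _ => by ring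

theorem subform_of_mem_span {g₁ : ι → F} {g₂ : κ → F} (han : QLF.Anisotropic 2 g₁)
    (hmem : ∀ i, g₁ i ∈ span (Kt (0 : F)) (range g₂)) :
    QLF.Subform 2 g₁ g₂ := by
  obtain ⟨T, hT⟩ := exists_comparison hmem
  refine ⟨T, ?_, hT⟩
  rw [← LinearMap.ker_eq_bot, eq_bot_iff]
  intro x hx
  rw [LinearMap.mem_ker] at hx
  have h0 : QLF.eval 2 g₁ x = 0 := by rw [hT, hx, eval_zero]
  rw [mem_bot]
  by_contra hxx
  exact han ⟨x, hxx, h0⟩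

theorem isometric_of_mem_span {g₁ : ι → F} {g₂ : κ → F} (han : QLF.Anisotropic 2 g₁)
    (hmem : ∀ i, g₁ i ∈ span (Kt (0 : F)) (range g₂))
    (hcard : Fintype.card ι = Fintype.card κ) :
    QLF.Isometric 2 g₁ g₂ := by
  obtain ⟨T, hTi, hT⟩ := subform_of_mem_span han hmem
  refine ⟨LinearMap.linearEquivOfInjective T hTi (by rw [Module.finrank_pi, Module.finrank_pi, hcard]), fun x => ?_⟩
  rw [hT]
  rfl

end Forms

section Pfister

variable {F : Type u} [Field F] [CharP F 2]

theorem pfister_zero_eq_one {r : ℕ} (πc : Fin r → F) :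
    QLF.pfister 2 πc (fun _ => (0 : Fin 2)) = 1 := by
  simp [QLF.pfister]

theorem pfister_mul {r : ℕ} (πc : Fin r → F) (e e' : Fin r → Fin 2) :
    ∃ kk : F, QLF.pfister 2 πc e * QLF.pfister 2 πc e' =
      kk ^ 2 * QLF.pfister 2 πc (e + e') := by
  classical
  refine ⟨∏ i, if e i = 1 ∧ e' i = 1 then πc i else 1, ?_⟩
  unfold QLF.pfister
  rw [← Finset.prod_mul_distrib, ← Finset.prod_pow, ← Finset.prod_mul_distrib]
  refine Finset.prod_congr rfl fun i _ => ?_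
  have : ∀ x y : Fin 2, πc i ^ (x : ℕ) * πc i ^ (y : ℕ) =
      (if x = 1 ∧ y = 1 then πc i else 1) ^ 2 * πc i ^ (((x + y) : Fin 2) : ℕ) := by
    intro x y
    fin_cases x <;> fin_cases y <;> simp <;> ring
  exact this (e i) (e' i)

/-- The `F²(t)`-span of the coefficients of a quasi-Pfister form. -/
def PL (t : F) {r : ℕ} (πc : Fin r → F) : Submodule (Kt t) F :=
  span (Kt t) (range (QLF.pfister 2 πc))

theorem one_mem_PL (t : F) {r : ℕ} (πc : Fin r → F) : (1 : F) ∈ PL t πc := by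
  rw [← pfister_zero_eq_one πc]
  exact subset_span ⟨_, rfl⟩

theorem mul_mem_PL {t : F} {r : ℕ} {πc : Fin r → F} {x y : F}
    (hx : x ∈ PL t πc) (hy : y ∈ PL t πc) : x * y ∈ PL t πc := by
  have h2 : PL t πc * PL t πc ≤ PL t πc := by
    rw [PL, span_mul_span]
    rw [span_le]
    rintro _ ⟨_, ⟨e, rfl⟩, _, ⟨e', rfl⟩, rfl⟩
    obtain ⟨kk, hkk⟩ := pfister_mul πc e e'
    show QLF.pfister 2 πc e * QLF.pfister 2 πc e' ∈ _
    rw [hkk]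
    exact smul_mem _ (⟨kk ^ 2, sq_mem_Kt t kk⟩ : Kt t) (subset_span ⟨e + e', rfl⟩)
  exact h2 (mul_mem_mul hx hy)

theorem inv_mem_PL {t : F} {r : ℕ} {πc : Fin r → F} {x : F}
    (hx : x ∈ PL t πc) : x⁻¹ ∈ PL t πc := by
  by_cases h0 : x = 0
  · rw [h0, inv_zero]; exact zero_mem _
  · have : x⁻¹ = (⟨x⁻¹ ^ 2, sq_mem_Kt t x⁻¹⟩ : Kt t) • x := by
      rw [smul_Kt]
      field_simp
    rw [this]
    exact smul_mem _ _ hx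

/-- Elements of a span over `F²(t)` decompose as `x + t y` with `x, y` in the span over `F²`. -/
theorem span_Kt_descent (t : F) (X : Set F) {z : F} (hz : z ∈ span (Kt t) X) :
    ∃ x ∈ span (Kt (0 : F)) X, ∃ y ∈ span (Kt (0 : F)) X, z = x + t * y := by
  induction hz using span_induction with
  | mem w hw => exact ⟨w, subset_span hw, 0, zero_mem _, by ring⟩
  | zero => exact ⟨0, zero_mem _, 0, zero_mem _, by ring⟩
  | add w₁ w₂ h₁ h₂ ih₁ ih₂ =>
      obtain ⟨x₁, hx₁, y₁, hy₁, rfl⟩ := ih₁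
      obtain ⟨x₂, hx₂, y₂, hy₂, rfl⟩ := ih₂
      exact ⟨x₁ + x₂, add_mem hx₁ hx₂, y₁ + y₂, add_mem hy₁ hy₂, by ring⟩
  | smul c w hw ih =>
      obtain ⟨x, hx, y, hy, rfl⟩ := ih
      obtain ⟨u, v, hc⟩ := c.2
      refine ⟨u ^ 2 * x + (t * v) ^ 2 * y, ?_, u ^ 2 * y + v ^ 2 * x, ?_, ?_⟩
      · exact add_mem (smul_mem _ (⟨u ^ 2, sq_mem_Kt 0 u⟩ : Kt (0:F)) hx)
          (smul_mem _ (⟨(t * v) ^ 2, sq_mem_Kt 0 (t*v)⟩ : Kt (0:F)) hy)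
      · exact add_mem (smul_mem _ (⟨u ^ 2, sq_mem_Kt 0 u⟩ : Kt (0:F)) hy)
          (smul_mem _ (⟨v ^ 2, sq_mem_Kt 0 v⟩ : Kt (0:F)) hx)
      · rw [smul_Kt, hc]; ring

/-- The span over `F²` is contained in the span over `F²(t)` (at the level of sets). -/
theorem spanK_le_spanKt (t : F) (X : Set F) {z : F} (hz : z ∈ span (Kt (0 : F)) X) :
    z ∈ span (Kt t) X := by
  induction hz using span_induction with
  | mem w hw => exact subset_span hw
  | zero => exact zero_mem _
  | add w₁ w₂ h₁ h₂ ih₁ ih₂ => exact add_mem ih₁ ih₂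
  | smul c w hw ih => exact smul_mem _ (⟨(c : F), K_le_Kt t c.2⟩ : Kt t) ih

theorem finrank_map_mulLeft (L : Subfield F) {a : F} (ha : a ≠ 0) (M : Submodule L F) :
    finrank L (M.map (LinearMap.mulLeft L a)) = finrank L M := by
  have hinj : Function.Injective (LinearMap.mulLeft L a) := fun x y hxy => by
    simpa using mul_left_cancel₀ ha hxy
  exact (LinearEquiv.finrank_eq (Submodule.equivMapOfInjective _ hinj M)).symm

theorem span_range_scaled (L : Subfield F) (a b : F) {r q : ℕ}
    (πc : Fin r → F) (ζ : Fin q → F) :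
    span L (range (fun i => a * Sum.elim (QLF.pfister 2 πc) (fun j => b * ζ j) i)) =
      Submodule.map (LinearMap.mulLeft L a)
        (span L (range (QLF.pfister 2 πc)) ⊔
          Submodule.map (LinearMap.mulLeft L b) (span L (range ζ))) := by
  have h1 : (range (fun i => a * Sum.elim (QLF.pfister 2 πc) (fun j => b * ζ j) i)) =
      ⇑(LinearMap.mulLeft L a) ''
        (range (QLF.pfister 2 πc) ∪ ⇑(LinearMap.mulLeft L b) '' (range ζ)) := by
    rw [show (fun i => a * Sum.elim (QLF.pfister 2 πc) (fun j => b * ζ j) i) =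
      ⇑(LinearMap.mulLeft L a) ∘ (Sum.elim (QLF.pfister 2 πc) (fun j => b * ζ j)) from rfl,
      Set.range_comp, Sum.elim_range,
      show (fun j => b * ζ j) = ⇑(LinearMap.mulLeft L b) ∘ ζ from rfl, Set.range_comp]
  rw [h1, Submodule.span_image (LinearMap.mulLeft L a), span_union,
    Submodule.span_image (LinearMap.mulLeft L b)]

end Pfister

section Fside

variable {F : Type u} [Field F] [CharP F 2]

theorem indep_Kt_of_indep_K {r q : ℕ} {πc : Fin r → F} {b t : F}
    (hbP : b ∉ PL (0 : F) πc) (hbL : b ∈ PL t πc)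
    {ζ : Fin q → F} (hζ : ∀ j, ζ j ∈ PL (0 : F) πc)
    (hζi : LinearIndependent (Kt (0 : F)) ζ) :
    LinearIndependent (Kt t) ζ := by
  obtain ⟨p, hp, q', hq', hb⟩ := span_Kt_descent t _ hbL
  have hq0 : q' ≠ 0 := by
    rintro rfl
    rw [mul_zero, add_zero] at hb
    exact hbP (hb ▸ hp)
  rw [Fintype.linearIndependent_iff]
  intro l hl
  have huv : ∀ j, ∃ u v : F, (l j : F) = u ^ 2 + t * v ^ 2 := fun j => (l j).2
  choose u v huv using huv
  set x := ∑ j, u j ^ 2 * ζ j with hxdef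
  set y := ∑ j, v j ^ 2 * ζ j with hydef
  have hxP : x ∈ PL (0:F) πc :=
    sum_mem fun j _ => smul_mem _ (⟨u j ^ 2, sq_mem_Kt 0 (u j)⟩ : Kt (0:F)) (hζ j)
  have hyP : y ∈ PL (0:F) πc :=
    sum_mem fun j _ => smul_mem _ (⟨v j ^ 2, sq_mem_Kt 0 (v j)⟩ : Kt (0:F)) (hζ j)
  have hxy0 : x + t * y = 0 := by
    rw [← hl, hxdef, hydef, Finset.mul_sum, ← Finset.sum_add_distrib]
    exact Finset.sum_congr rfl fun j _ => by rw [smul_Kt, huv]; ring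
  have h3 : b + p = t * q' := by
    rw [hb, add_comm p (t * q'), add_assoc, CharTwo.add_self_eq_zero, add_zero]
  have hkey : (q' * x + p * y) + b * y = 0 := by
    have : q' * x + p * y + b * y = q' * (x + t * y) := by linear_combination y * h3
    rw [this, hxy0, mul_zero]
  have hy0 : y = 0 := by
    by_contra hy0
    have hby : b * y = q' * x + p * y := by
      have h := eq_neg_of_add_eq_zero_right hkey
      rw [CharTwo.neg_eq] at h
      exact h
    have : b = (q' * x + p * y) * y⁻¹ := by
      rw [← hby]; field_simp
    exact hbP (this ▸ mul_mem_PL (add_mem (mul_mem_PL hq' hxP) (mul_mem_PL hp hyP))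
      (inv_mem_PL hyP))
  have hx0 : x = 0 := by
    rw [hy0, mul_zero, add_zero] at hxy0
    exact hxy0
  have hu0 : ∀ j, u j = 0 := by
    have := Fintype.linearIndependent_iff.mp hζi
      (fun j => (⟨u j ^ 2, sq_mem_Kt 0 (u j)⟩ : Kt (0:F))) (by rw [← hx0, hxdef]; rfl)
    intro j
    have hj := this j
    rw [Subtype.ext_iff] at hj
    exact pow_eq_zero_iff (n := 2) (by norm_num) |>.mp hj
  have hv0 : ∀ j, v j = 0 := by
    have := Fintype.linearIndependent_iff.mp hζi
      (fun j => (⟨v j ^ 2, sq_mem_Kt 0 (v j)⟩ : Kt (0:F))) (by rw [← hy0, hydef]; rfl)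
    intro j
    have hj := this j
    rw [Subtype.ext_iff] at hj
    exact pow_eq_zero_iff (n := 2) (by norm_num) |>.mp hj
  intro j
  ext
  rw [huv j, hu0 j, hv0 j]
  simp

theorem fside {r q : ℕ} {πc : Fin r → F} {b t : F}
    (hbP : b ∉ PL (0 : F) πc)
    {ζ ζ' : Fin q → F}
    (hζ : ∀ j, ζ j ∈ PL (0 : F) πc) (hζ' : ∀ j, ζ' j ∈ PL (0 : F) πc)
    (hζi : LinearIndependent (Kt (0 : F)) ζ) (hζi' : LinearIndependent (Kt (0 : F)) ζ')
    (hdim : finrank (Kt t)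
        ↥(PL t πc ⊔ Submodule.map (LinearMap.mulLeft (Kt t) b) (span (Kt t) (range ζ)))
      = finrank (Kt t)
        ↥(PL t πc ⊔ Submodule.map (LinearMap.mulLeft (Kt t) b) (span (Kt t) (range ζ')))) :
    finrank (Kt t) ↥(span (Kt t) (range ζ)) = finrank (Kt t) ↥(span (Kt t) (range ζ')) := by
  have hb0 : b ≠ 0 := fun h => hbP (by rw [h]; exact zero_mem _)
  by_cases hbL : b ∈ PL t πc
  · rw [finrank_span_eq_card (indep_Kt_of_indep_K hbP hbL hζ hζi),
      finrank_span_eq_card (indep_Kt_of_indep_K hbP hbL hζ' hζi')]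
  · have key : ∀ ξ : Fin q → F, (∀ j, ξ j ∈ PL (0 : F) πc) →
        finrank (Kt t)
          ↥(PL t πc ⊔ Submodule.map (LinearMap.mulLeft (Kt t) b) (span (Kt t) (range ξ)))
        = finrank (Kt t) (PL t πc) + finrank (Kt t) (span (Kt t) (range ξ)) := by
      intro ξ hξ
      have hle : span (Kt t) (range ξ) ≤ PL t πc := by
        rw [span_le]
        rintro _ ⟨j, rfl⟩
        exact spanK_le_spanKt t _ (hξ j)
      have hinf : PL t πc ⊓ Submodule.map (LinearMap.mulLeft (Kt t) b)
          (span (Kt t) (range ξ)) = ⊥ := by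
        rw [eq_bot_iff]
        rintro z ⟨hz1, hz2⟩
        obtain ⟨w, hw, rfl⟩ := hz2
        rw [LinearMap.mulLeft_apply] at hz1 ⊢
        by_cases hw0 : w = 0
        · rw [hw0, mul_zero]; exact zero_mem _
        · refine absurd ?_ hbL
          have : b = b * w * w⁻¹ := by field_simp
          rw [this]
          exact mul_mem_PL hz1 (inv_mem_PL (hle hw))
      haveI : FiniteDimensional (Kt t) (PL t πc) :=
        FiniteDimensional.span_of_finite _ (finite_range _)
      haveI : FiniteDimensional (Kt t) (span (Kt t) (range ξ)) :=
        FiniteDimensional.span_of_finite _ (finite_range _)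
      haveI : FiniteDimensional (Kt t)
          (Submodule.map (LinearMap.mulLeft (Kt t) b) (span (Kt t) (range ξ))) :=
        Module.Finite.map _ _
      have hh := Submodule.finrank_sup_add_finrank_inf_eq (PL t πc)
        (Submodule.map (LinearMap.mulLeft (Kt t) b) (span (Kt t) (range ξ)))
      rw [hinf, finrank_bot, add_zero, finrank_map_mulLeft _ hb0] at hh
      exact hh
    rw [key ζ hζ, key ζ' hζ'] at hdim
    exact Nat.add_left_cancel hdim

end Fside

section Bridge

variable {F : Type u} [Field F] [CharP F 2]

theorem defect_formula {E : Type u} [Field E] [CharP E 2] (f : F →+* E) (α : E)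
    {t : F} (hft : f t = α ^ 2)
    (hcl : Subfield.closure (insert α (Set.range ⇑f)) = ⊤)
    {ι : Type*} [Fintype ι] (g : ι → F) :
    QLF.defect 2 (⇑f ∘ g) + finrank (Kt t) (span (Kt t) (range g)) = Fintype.card ι := by
  classical
  -- every element of `E` is `f u + α * f v`
  have hdec : ∀ e : E, ∃ u v : F, e = f u + α * f v := by
    have hsq : ∀ u v : F, (f u + α * f v) ^ 2 = f (u ^ 2 + t * v ^ 2) := by
      intro u v
      rw [CharTwo.add_sq, mul_pow, ← hft, map_add, map_mul, map_pow, map_pow]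
    let Esub : Subfield E :=
      { carrier := {e | ∃ u v : F, e = f u + α * f v}
        zero_mem' := ⟨0, 0, by simp⟩
        one_mem' := ⟨1, 0, by simp⟩
        add_mem' := by
          rintro x y ⟨u, v, rfl⟩ ⟨u', v', rfl⟩
          exact ⟨u + u', v + v', by rw [map_add, map_add]; ring⟩
        neg_mem' := by
          rintro x ⟨u, v, rfl⟩
          exact ⟨-u, -v, by rw [map_neg, map_neg]; ring⟩
        mul_mem' := by
          rintro x y ⟨u, v, rfl⟩ ⟨u', v', rfl⟩
          refine ⟨u * u' + t * (v * v'), u * v' + u' * v, ?_⟩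
          simp only [map_add, map_mul]
          linear_combination (- (f v * f v')) * hft
        inv_mem' := by
          rintro x ⟨u, v, rfl⟩
          by_cases hx : f u + α * f v = 0
          · rw [hx, inv_zero]; exact ⟨0, 0, by simp⟩
          · refine ⟨u * (u ^ 2 + t * v ^ 2)⁻¹, v * (u ^ 2 + t * v ^ 2)⁻¹, ?_⟩
            have hz2 : (f u + α * f v) ^ 2 = f (u ^ 2 + t * v ^ 2) := hsq u v
            have hw0 : f (u ^ 2 + t * v ^ 2) ≠ 0 := by
              rw [← hz2]
              exact pow_ne_zero 2 hx
            have hw0' : (u ^ 2 + t * v ^ 2) ≠ 0 := fun h => hw0 (by rw [h, map_zero])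
            have key : (f u + α * f v)⁻¹ = (f u + α * f v) * (f (u ^ 2 + t * v ^ 2))⁻¹ := by
              rw [← hz2, pow_two, mul_inv, ← mul_assoc, mul_inv_cancel₀ hx, one_mul]
            rw [map_mul, map_mul, map_inv₀, key]
            ring
        }
    intro e
    have he : e ∈ Subfield.closure (insert α (Set.range ⇑f)) := by
      rw [hcl]; exact Subfield.mem_top e
    have hsub : insert α (Set.range ⇑f) ⊆ ↑Esub := by
      rintro x (rfl | ⟨u, rfl⟩)
      · exact ⟨0, 1, by simp⟩
      · exact ⟨u, 0, by simp⟩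
    exact Subfield.closure_le.mpr hsub he
  have hsq : ∀ u v : F, (f u + α * f v) ^ 2 = f (u ^ 2 + t * v ^ 2) := by
    intro u v
    rw [CharTwo.add_sq, mul_pow, ← hft, map_add, map_mul, map_pow, map_pow]
  have sqE : ∀ e : E, ∃ kk : Kt t, e ^ 2 = f (kk : F) := by
    intro e
    obtain ⟨u, v, rfl⟩ := hdec e
    exact ⟨⟨u ^ 2 + t * v ^ 2, ⟨u, v, rfl⟩⟩, hsq u v⟩
  have finj : Function.Injective ⇑f := f.injective
  -- basis of the span
  set L := Kt t with hL
  set N := span L (range g) with hN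
  haveI : FiniteDimensional L N := FiniteDimensional.span_of_finite _ (finite_range _)
  set d := finrank L N with hd
  let w : Basis (Fin d) L N := Module.finBasis L N
  have hgmem : ∀ i, g i ∈ N := fun i => subset_span ⟨i, rfl⟩
  let gN : ι → N := fun i => ⟨g i, hgmem i⟩
  let k : ι → Fin d → L := fun i j => w.repr (gN i) j
  have hgik : ∀ i, g i = ∑ j, (k i j : F) * (w j : F) := by
    intro i
    have h1 := congrArg (Subtype.val) (w.sum_repr (gN i))
    rw [show (gN i : F) = g i from rfl] at h1
    rw [← h1]
    rw [AddSubmonoidClass.coe_finset_sum]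
    rfl
  have hUV : ∀ i j, ∃ u v : F, ((k i j : F)) = u ^ 2 + t * v ^ 2 := fun i j => (k i j).2
  choose U V hUV using hUV
  let ee : ι → Fin d → E := fun i j => f (U i j) + α * f (V i j)
  have he2 : ∀ i j, ee i j ^ 2 = f (k i j : F) := by
    intro i j
    rw [show ee i j = f (U i j) + α * f (V i j) from rfl, hsq, ← hUV]
  -- the linear map A
  let A : (ι → E) →ₗ[E] (Fin d → E) :=
    { toFun := fun x j => ∑ i, ee i j * x i
      map_add' := by
        intro x y; funext j
        simp only [Pi.add_apply, mul_add]
        exact Finset.sum_add_distrib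
      map_smul' := by
        intro c x; funext j
        simp only [Pi.smul_apply, smul_eq_mul, RingHom.id_apply, Finset.mul_sum]
        exact Finset.sum_congr rfl fun i _ => by ring }
  have hA : ∀ (x : ι → E) (j : Fin d), A x j = ∑ i, ee i j * x i := fun x j => rfl
  -- independence over squares
  have wind : ∀ z : Fin d → E, ∑ j, z j ^ 2 * f (w j : F) = 0 → ∀ j, z j = 0 := by
    intro z hz
    have huv : ∀ j, ∃ kk : L, z j ^ 2 = f (kk : F) := fun j => sqE (z j)
    choose lam hlam using huv
    have hF : ∑ j, (lam j : F) * (w j : F) = 0 := by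
      apply finj
      rw [map_sum, map_zero, ← hz]
      exact Finset.sum_congr rfl fun j _ => by rw [map_mul, ← hlam]
    have hNsum : ∑ j, lam j • w j = (0 : N) := by
      apply Subtype.ext
      rw [AddSubmonoidClass.coe_finset_sum]
      exact hF
    have hlam0 := Fintype.linearIndependent_iff.mp w.linearIndependent lam hNsum
    intro j
    have : z j ^ 2 = 0 := by
      rw [hlam j, hlam0 j]
      simp
    exact pow_eq_zero_iff (n := 2) (by norm_num) |>.mp this
  -- kernel identification
  have keyid : ∀ x : ι → E, QLF.eval 2 (⇑f ∘ g) x = ∑ j, (A x j) ^ 2 * f (w j : F) := by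
    intro x
    rw [eval_def]
    have h1 : ∀ i, (⇑f ∘ g) i * x i ^ 2 = ∑ j, (ee i j * x i) ^ 2 * f (w j : F) := by
      intro i
      rw [Function.comp_apply, hgik i, map_sum, Finset.sum_mul]
      refine Finset.sum_congr rfl fun j _ => ?_
      rw [map_mul, ← he2, mul_pow]
      ring
    rw [Finset.sum_congr rfl fun i _ => h1 i, Finset.sum_comm]
    refine Finset.sum_congr rfl fun j _ => ?_
    rw [hA, CharTwo.sum_sq, Finset.sum_mul]
  have hAker : LinearMap.ker A = QLF.zeroSubmodule 2 (⇑f ∘ g) := by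
    ext x
    constructor
    · intro hx
      rw [LinearMap.mem_ker] at hx
      show QLF.eval 2 (⇑f ∘ g) x = 0
      rw [keyid x]
      refine Finset.sum_eq_zero fun j _ => ?_
      rw [show A x j = 0 from congrFun hx j]
      ring
    · intro hx
      have hx' : QLF.eval 2 (⇑f ∘ g) x = 0 := hx
      rw [LinearMap.mem_ker]
      funext j
      rw [keyid x] at hx'
      exact wind (fun j => A x j) hx' j
  -- surjectivity
  have hAsurj : Function.Surjective A := by
    have hwmem : ∀ j : Fin d, ((w j : F)) ∈ span L (range g) := fun j => (w j).2
    have hκ : ∀ j : Fin d, ∃ c : ι → L, ∑ i, c i • g i = (w j : F) :=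
      fun j => (mem_span_range_iff_exists_fun _).mp (hwmem j)
    choose κ hκ using hκ
    have hδ : ∀ l j : Fin d, ∑ i, (κ l i : F) * (k i j : F) = if l = j then 1 else 0 := by
      intro l j
      have hNl : ∑ i, κ l i • gN i = w l := by
        apply Subtype.ext
        rw [AddSubmonoidClass.coe_finset_sum]
        simp only [SetLike.val_smul]
        exact hκ l
      have h2 : w.repr (∑ i, κ l i • gN i) j = w.repr (w l) j := by rw [hNl]
      rw [map_sum, Basis.repr_self, Finsupp.single_apply] at h2
      simp only [map_smul, Finsupp.smul_apply, Finsupp.coe_finset_sum, Finset.sum_apply] at h2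
      have h3 := congrArg (Subtype.val) h2
      rw [AddSubmonoidClass.coe_finset_sum] at h3
      have h4 : ∑ i, (κ l i : F) * (k i j : F) = ∑ x, ((κ l x • (w.repr (gN x)) j : L) : F) := by
        refine Finset.sum_congr rfl fun i _ => ?_
        rw [smul_eq_mul]
        push_cast
        rfl
      rw [h4, h3, apply_ite (Subtype.val)]
      rfl
    have hηuv : ∀ (l : Fin d) (i : ι), ∃ u v : F, ((κ l i : F)) = u ^ 2 + t * v ^ 2 :=
      fun l i => (κ l i).2
    choose Uη Vη hηuv using hηuv
    let η : Fin d → ι → E := fun l i => f (Uη l i) + α * f (Vη l i)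
    have hη2 : ∀ l i, η l i ^ 2 = f (κ l i : F) := by
      intro l i
      rw [show η l i = f (Uη l i) + α * f (Vη l i) from rfl, hsq, ← hηuv]
    intro y
    refine ⟨fun i => ∑ l, η l i * y l, ?_⟩
    funext j
    rw [hA]
    have swap : ∑ i, ee i j * ∑ l, η l i * y l = ∑ l, (∑ i, η l i * ee i j) * y l := by
      calc ∑ i, ee i j * ∑ l, η l i * y l
          = ∑ i, ∑ l, η l i * ee i j * y l := Finset.sum_congr rfl fun i _ => by
            rw [Finset.mul_sum]
            exact Finset.sum_congr rfl fun l _ => by ring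
        _ = ∑ l, ∑ i, η l i * ee i j * y l := Finset.sum_comm
        _ = ∑ l, (∑ i, η l i * ee i j) * y l :=
            Finset.sum_congr rfl fun l _ => (Finset.sum_mul _ _ _).symm
    have hfi : Function.Injective fun z : E => z ^ 2 := by
      intro z1 z2 h
      exact frobenius_inj E 2 (by simpa [frobenius_def] using h)
    have hc : ∀ l, (∑ i, η l i * ee i j) = if l = j then 1 else 0 := by
      intro l
      have hc2 : (∑ i, η l i * ee i j) ^ 2 = (if l = j then (1:E) else 0) := by
        rw [CharTwo.sum_sq]
        have hterm : ∀ i, (η l i * ee i j) ^ 2 = f ((κ l i : F) * (k i j : F)) := by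
          intro i
          rw [mul_pow, hη2, he2, ← map_mul]
        rw [Finset.sum_congr rfl fun i _ => hterm i, ← map_sum, hδ l j, apply_ite f,
          map_one, map_zero]
      refine hfi ?_
      show (∑ i, η l i * ee i j) ^ 2 = (if l = j then (1:E) else 0) ^ 2
      rw [hc2, ite_pow, one_pow, zero_pow (by norm_num : (2:ℕ) ≠ 0)]
    rw [swap, Finset.sum_congr rfl fun l _ => by rw [hc l]]
    simp [ite_mul, one_mul, zero_mul, Finset.sum_ite_eq']
  -- rank-nullity
  have hrn := LinearMap.finrank_range_add_finrank_ker A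
  rw [LinearMap.range_eq_top.mpr hAsurj, finrank_top, hAker] at hrn
  have h1 : finrank E (Fin d → E) = d := by rw [Module.finrank_pi]; exact Fintype.card_fin d
  have h2 : finrank E (ι → E) = Fintype.card ι := Module.finrank_pi E
  have hdef : QLF.defect 2 (⇑f ∘ g) = finrank E (QLF.zeroSubmodule 2 (⇑f ∘ g)) := rfl
  rw [h1, h2] at hrn
  rw [hdef]
  omega

end Bridge

section Wrap

variable {F : Type u} [Field F] [CharP F 2]

theorem span_range_mul (L : Subfield F) (c : F) {ι : Type*} (g : ι → F) :
    span L (range fun i => c * g i) =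
      Submodule.map (LinearMap.mulLeft L c) (span L (range g)) := by
  rw [show (fun i => c * g i) = ⇑(LinearMap.mulLeft L c) ∘ g from rfl, Set.range_comp,
    Submodule.span_image]

theorem f_to_wve {ι κ : Type*} [Fintype ι] [Fintype κ] {g₁ : ι → F} {g₂ : κ → F}
    (hcard : Fintype.card ι = Fintype.card κ)
    (hdim : ∀ t : F, finrank (Kt t) (span (Kt t) (range g₁))
      = finrank (Kt t) (span (Kt t) (range g₂))) :
    QLF.WeakVishikEquiv 2 g₁ g₂ := by
  refine ⟨hcard, ?_⟩
  intro E _ _ f α hα hcl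
  obtain ⟨t, hft⟩ := hα
  have h1 := defect_formula f α hft hcl g₁
  have h2 := defect_formula f α hft hcl g₂
  rw [← hdim t] at h2
  omega

theorem wve_to_f {ι κ : Type*} [Fintype ι] [Fintype κ] {g₁ : ι → F} {g₂ : κ → F}
    (h : QLF.WeakVishikEquiv 2 g₁ g₂) (t : F) :
    finrank (Kt t) (span (Kt t) (range g₁)) = finrank (Kt t) (span (Kt t) (range g₂)) := by
  obtain ⟨hcard, hdef⟩ := h
  by_cases hsq : ∃ u : F, u ^ 2 = t
  · obtain ⟨u, hu⟩ := hsq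
    have hft : (RingHom.id F) t = u ^ 2 := hu.symm
    have hcl : Subfield.closure (insert u (Set.range ⇑(RingHom.id F))) = ⊤ := by
      rw [eq_top_iff]
      intro x _
      exact Subfield.subset_closure (Set.mem_insert_iff.mpr (Or.inr ⟨x, rfl⟩))
    have h1 := defect_formula (RingHom.id F) u hft hcl g₁
    have h2 := defect_formula (RingHom.id F) u hft hcl g₂
    have h3 := hdef F (RingHom.id F) u ⟨t, hft⟩ hcl
    omega
  · have hirr : Irreducible (Polynomial.X ^ 2 - Polynomial.C t) :=
      X_pow_sub_C_irreducible_of_prime Nat.prime_two (fun b hb => hsq ⟨b, hb⟩)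
    haveI : Fact (Irreducible (Polynomial.X ^ 2 - Polynomial.C t)) := ⟨hirr⟩
    set E := AdjoinRoot (Polynomial.X ^ 2 - Polynomial.C t) with hE
    let f : F →+* E := algebraMap F E
    haveI : CharP E 2 := charP_of_injective_ringHom f.injective 2
    let α : E := AdjoinRoot.root _
    have hft : f t = α ^ 2 := by
      have h0 : (Polynomial.aeval α) (Polynomial.X ^ 2 - Polynomial.C t) = 0 := by
        rw [AdjoinRoot.aeval_eq, AdjoinRoot.mk_self]
      rw [map_sub, map_pow, Polynomial.aeval_X, Polynomial.aeval_C, sub_eq_zero] at h0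
      exact h0.symm
    have hcl : Subfield.closure (insert α (Set.range ⇑f)) = ⊤ := by
      let SA : Subalgebra F E :=
        { toSubsemiring := (Subfield.closure (insert α (Set.range ⇑f))).toSubring.toSubsemiring
          algebraMap_mem' := fun r =>
            Subfield.subset_closure (Set.mem_insert_iff.mpr (Or.inr ⟨r, rfl⟩)) }
      have h5 : Algebra.adjoin F ({α} : Set E) ≤ SA :=
        Algebra.adjoin_le (Set.singleton_subset_iff.mpr
          (Subfield.subset_closure (Set.mem_insert _ _)))
      rw [eq_top_iff]
      intro x _
      have hx : x ∈ Algebra.adjoin F ({α} : Set E) := by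
        rw [AdjoinRoot.adjoinRoot_eq_top]
        exact Algebra.mem_top
      exact h5 hx
    have h1 := defect_formula f α hft hcl g₁
    have h2 := defect_formula f α hft hcl g₂
    have h3 := hdef E f α ⟨t, hft⟩ hcl
    omega

end Wrap

section Main

theorem main {F : Type u} [Field F] [CharP F 2]
    {n m r s : ℕ} (φ : Fin n → F) (ψ : Fin m → F)
    (hφan : QLF.Anisotropic 2 φ) (hψan : QLF.Anisotropic 2 ψ)
    (h : QLF.WeakVishikEquiv 2 φ ψ)
    (πc : Fin r → F) (hπc : ∀ i, πc i ≠ 0) (b : F) (hb : b ≠ 0)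
    (σ : Fin s → F) (hσπ : QLF.Subform 2 σ (QLF.pfister 2 πc))
    (hspn : QLF.Similar 2 φ (Sum.elim (QLF.pfister 2 πc) fun j => b * σ j))
    (c : F) (hc : c ≠ 0)
    (hcπ : QLF.Subform 2 (fun e => c * QLF.pfister 2 πc e) ψ) :
    ∃ (s' : ℕ) (ρ : Fin s' → F),
      QLF.Subform 2 ρ (QLF.pfister 2 πc) ∧
      QLF.Similar 2 ψ (Sum.elim (QLF.pfister 2 πc) fun j => b * ρ j) ∧
      QLF.WeakVishikEquiv 2 ρ σ := by
  classical
  obtain ⟨a, ha, hiso⟩ := hspn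
  have hnm : n = m := by simpa using h.1
  have hn : n = 2 ^ r + s := by
    obtain ⟨T, -⟩ := hiso
    have hfr := T.finrank_eq
    rw [Module.finrank_pi, Module.finrank_pi] at hfr
    simpa [Fintype.card_sum, Fintype.card_fun] using hfr
  have hπan : QLF.Anisotropic 2 (QLF.pfister 2 πc) := by
    have h1 : QLF.Anisotropic 2 (fun e => c * QLF.pfister 2 πc e) :=
      anisotropic_of_subform hcπ hψan
    exact (anisotropic_smul_iff hc _).mp h1
  have hσan : QLF.Anisotropic 2 σ := anisotropic_of_subform hσπ hπan
  have hπind := (anisotropic_iff_linearIndependent (QLF.pfister 2 πc)).mp hπan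
  have hψind := (anisotropic_iff_linearIndependent ψ).mp hψan
  have hφind := (anisotropic_iff_linearIndependent φ).mp hφan
  have hσind := (anisotropic_iff_linearIndependent σ).mp hσan
  have hσmem : ∀ j, σ j ∈ span (Kt (0:F)) (range (QLF.pfister 2 πc)) := fun j =>
    subform_span_le (Kt (0:F)) (fun x => sq_mem_Kt 0 x) hσπ (subset_span ⟨j, rfl⟩)
  have hφspan : ∀ t : F, span (Kt t) (range φ) =
      Submodule.map (LinearMap.mulLeft (Kt t) a)
        (span (Kt t) (range (QLF.pfister 2 πc)) ⊔
          Submodule.map (LinearMap.mulLeft (Kt t) b) (span (Kt t) (range σ))) := by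
    intro t
    rw [isometric_span_eq (Kt t) (fun x => sq_mem_Kt t x) hiso, span_range_scaled]
  have hWVE := wve_to_f h
  have hP0 : finrank (Kt (0:F)) (span (Kt (0:F)) (range (QLF.pfister 2 πc))) = 2 ^ r := by
    rw [finrank_span_eq_card hπind]
    simp [Fintype.card_fun]
  have hW0 : finrank (Kt (0:F)) (span (Kt (0:F)) (range ψ)) = m := by
    rw [finrank_span_eq_card hψind]; simp
  have hφ0 : finrank (Kt (0:F)) (span (Kt (0:F)) (range φ)) = n := by
    rw [finrank_span_eq_card hφind]; simp
  have hcPW : Submodule.map (LinearMap.mulLeft (Kt (0:F)) c)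
      (span (Kt (0:F)) (range (QLF.pfister 2 πc))) ≤ span (Kt (0:F)) (range ψ) := by
    have h1 := subform_span_le (Kt (0:F)) (fun x => sq_mem_Kt 0 x) hcπ
    rwa [span_range_mul] at h1
  haveI : FiniteDimensional (Kt (0:F)) (span (Kt (0:F)) (range ψ)) :=
    FiniteDimensional.span_of_finite _ (finite_range _)
  haveI : FiniteDimensional (Kt (0:F)) (span (Kt (0:F)) (range (QLF.pfister 2 πc))) :=
    FiniteDimensional.span_of_finite _ (finite_range _)
  by_cases hs : s = 0
  · -- degenerate case: σ empty
    subst hs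
    have hW : Submodule.map (LinearMap.mulLeft (Kt (0:F)) c)
        (span (Kt (0:F)) (range (QLF.pfister 2 πc))) = span (Kt (0:F)) (range ψ) := by
      refine Submodule.eq_of_le_of_finrank_le hcPW ?_
      rw [hW0, finrank_map_mulLeft _ hc, hP0]
      omega
    refine ⟨0, fun j => 1, ?_, ?_, ?_⟩
    · refine subform_of_mem_span ?_ (fun i => i.elim0)
      rintro ⟨x, hx, -⟩
      exact hx (funext fun i => i.elim0)
    · refine ⟨c, hc, isometric_of_mem_span hψan ?_ ?_⟩
      · intro i
        rw [span_range_scaled]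
        have hz : Submodule.map (LinearMap.mulLeft (Kt (0:F)) b)
            (span (Kt (0:F)) (range (fun j : Fin 0 => (1:F)))) = ⊥ := by
          rw [Set.range_eq_empty, span_empty, Submodule.map_bot]
        rw [hz, sup_bot_eq, hW]
        exact subset_span ⟨i, rfl⟩
      · simp only [Fintype.card_fin, Fintype.card_sum, Fintype.card_fun]
        omega
    · refine f_to_wve rfl ?_
      intro t
      have e1 : (range (fun j : Fin 0 => (1:F))) = (∅ : Set F) := Set.range_eq_empty _
      have e2 : (range σ) = (∅ : Set F) := Set.range_eq_empty _
      rw [e1, e2]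
  · -- main case
    have hbP : b ∉ span (Kt (0:F)) (range (QLF.pfister 2 πc)) := by
      intro hbp
      have h1 : Submodule.map (LinearMap.mulLeft (Kt (0:F)) b) (span (Kt (0:F)) (range σ))
          ≤ span (Kt (0:F)) (range (QLF.pfister 2 πc)) := by
        rintro _ ⟨x, hx, rfl⟩
        have hx' : x ∈ span (Kt (0:F)) (range (QLF.pfister 2 πc)) := by
          refine (span_le.mpr ?_) hx
          rintro _ ⟨j, rfl⟩
          exact hσmem j
        exact mul_mem_PL hbp hx'
      have h2 := hφspan 0
      rw [sup_eq_left.mpr h1] at h2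
      have h3 := hφ0
      rw [h2, finrank_map_mulLeft _ ha, hP0] at h3
      omega
    have hSb : Submodule.map (LinearMap.mulLeft (Kt b) b) (span (Kt b) (range σ))
        ≤ span (Kt b) (range (QLF.pfister 2 πc)) := by
      rintro _ ⟨x, hx, rfl⟩
      have hx' : x ∈ span (Kt b) (range (QLF.pfister 2 πc)) := by
        refine (span_le.mpr ?_) hx
        rintro _ ⟨j, rfl⟩
        exact spanK_le_spanKt b _ (hσmem j)
      exact Submodule.smul_mem _ (⟨b, mem_Kt_self b⟩ : Kt b) hx'
    have hAb : span (Kt b) (range ψ)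
        = Submodule.map (LinearMap.mulLeft (Kt b) c) (span (Kt b) (range (QLF.pfister 2 πc))) := by
      have h2 : finrank (Kt b) (span (Kt b) (range φ))
          = finrank (Kt b) (span (Kt b) (range (QLF.pfister 2 πc))) := by
        rw [hφspan b, sup_eq_left.mpr hSb, finrank_map_mulLeft _ ha]
      have h3 : Submodule.map (LinearMap.mulLeft (Kt b) c)
          (span (Kt b) (range (QLF.pfister 2 πc))) ≤ span (Kt b) (range ψ) := by
        have h4 := subform_span_le (Kt b) (fun x => sq_mem_Kt b x) hcπ
        rwa [span_range_mul] at h4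
      haveI : FiniteDimensional (Kt b) (span (Kt b) (range ψ)) :=
        FiniteDimensional.span_of_finite _ (finite_range _)
      refine (Submodule.eq_of_le_of_finrank_le h3 ?_).symm
      rw [finrank_map_mulLeft _ hc, ← h2, hWVE b]
    have hψQ : ∀ i, ψ i ∈ Submodule.map (LinearMap.mulLeft (Kt (0:F)) c)
        (span (Kt (0:F)) (range (QLF.pfister 2 πc))) ⊔
        Submodule.map (LinearMap.mulLeft (Kt (0:F)) (c * b))
          (span (Kt (0:F)) (range (QLF.pfister 2 πc))) := by
      intro i
      have h1 : ψ i ∈ span (Kt b) (range ψ) := subset_span ⟨i, rfl⟩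
      rw [hAb] at h1
      obtain ⟨z, hz, hze⟩ := h1
      obtain ⟨x, hx, y, hy, rfl⟩ := span_Kt_descent b _ hz
      have hxe : ψ i = c * x + (c * b) * y := by
        rw [← hze, LinearMap.mulLeft_apply]
        ring
      rw [hxe]
      exact add_mem (mem_sup_left ⟨x, hx, rfl⟩) (mem_sup_right ⟨y, hy, rfl⟩)
    have hψsup : span (Kt (0:F)) (range ψ) ≤
        Submodule.map (LinearMap.mulLeft (Kt (0:F)) c)
          (span (Kt (0:F)) (range (QLF.pfister 2 πc))) ⊔
        Submodule.map (LinearMap.mulLeft (Kt (0:F)) (c * b))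
          (span (Kt (0:F)) (range (QLF.pfister 2 πc))) := by
      rw [span_le]
      rintro _ ⟨i, rfl⟩
      exact hψQ i
    set U := span (Kt (0:F)) (range ψ) ⊓
      Submodule.map (LinearMap.mulLeft (Kt (0:F)) (c * b))
        (span (Kt (0:F)) (range (QLF.pfister 2 πc))) with hUdef
    have hWdec : span (Kt (0:F)) (range ψ)
        = Submodule.map (LinearMap.mulLeft (Kt (0:F)) c)
            (span (Kt (0:F)) (range (QLF.pfister 2 πc))) ⊔ U := by
      refine le_antisymm ?_ (sup_le hcPW inf_le_left)
      intro w hw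
      obtain ⟨x, hx, y, hy, hxy⟩ := mem_sup.mp (hψsup hw)
      have hyW : y ∈ span (Kt (0:F)) (range ψ) := by
        have hy2 : y = w - x := by rw [← hxy]; ring
        rw [hy2]
        exact sub_mem hw (hcPW hx)
      rw [← hxy]
      exact add_mem (mem_sup_left hx) (mem_sup_right (mem_inf.mpr ⟨hyW, hy⟩))
    have hdisj : Submodule.map (LinearMap.mulLeft (Kt (0:F)) c)
        (span (Kt (0:F)) (range (QLF.pfister 2 πc))) ⊓ U = ⊥ := by
      rw [eq_bot_iff]
      rintro z ⟨hz1, hz2⟩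
      have hz3 := (mem_inf.mp hz2).2
      obtain ⟨x, hx, hxe⟩ := hz1
      obtain ⟨y, hy, hye⟩ := hz3
      simp only [LinearMap.mulLeft_apply] at hxe hye
      by_cases hy0 : y = 0
      · have hz0 : z = 0 := by rw [← hye, hy0, mul_zero]
        rw [hz0]
        exact Submodule.zero_mem ⊥
      · exfalso
        apply hbP
        have h5 : c * x = c * (b * y) := by
          rw [hxe, ← hye]
          ring
        have hxy : x = b * y := mul_left_cancel₀ hc h5
        have h6 : b = x * y⁻¹ := by
          rw [hxy]
          field_simp
        rw [h6]
        exact mul_mem_PL hx (inv_mem_PL hy)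
    haveI hUfd : FiniteDimensional (Kt (0:F)) U :=
      Submodule.finiteDimensional_of_le inf_le_left
    haveI : FiniteDimensional (Kt (0:F)) (Submodule.map (LinearMap.mulLeft (Kt (0:F)) c)
        (span (Kt (0:F)) (range (QLF.pfister 2 πc)))) := Module.Finite.map _ _
    have hUs : finrank (Kt (0:F)) U = s := by
      have h6 := Submodule.finrank_sup_add_finrank_inf_eq
        (Submodule.map (LinearMap.mulLeft (Kt (0:F)) c)
          (span (Kt (0:F)) (range (QLF.pfister 2 πc)))) U
      rw [hdisj, ← hWdec, finrank_bot, add_zero, hW0, finrank_map_mulLeft _ hc, hP0] at h6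
      omega
    let uB : Basis (Fin s) (Kt (0:F)) U := Module.finBasisOfFinrankEq _ _ hUs
    have hcb : c * b ≠ 0 := mul_ne_zero hc hb
    set ρ : Fin s → F := fun j => (c * b)⁻¹ * ((uB j : F)) with hρdef
    have hρP : ∀ j, ρ j ∈ span (Kt (0:F)) (range (QLF.pfister 2 πc)) := by
      intro j
      have h1 : ((uB j : F)) ∈ U := (uB j).2
      have h2 := (mem_inf.mp h1).2
      obtain ⟨x, hx, hxe⟩ := h2
      simp only [LinearMap.mulLeft_apply] at hxe
      have h3 : ρ j = x := by
        rw [hρdef]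
        show (c * b)⁻¹ * ((uB j : F)) = x
        rw [← hxe, inv_mul_cancel_left₀ hcb]
      rw [h3]
      exact hx
    have hρind : LinearIndependent (Kt (0:F)) ρ := by
      have h1 := uB.linearIndependent.map' U.subtype (Submodule.ker_subtype U)
      have h2 := h1.map' (LinearMap.mulLeft (Kt (0:F)) ((c*b)⁻¹))
        (LinearMap.ker_eq_bot.mpr (fun x y hxy => by
          simp only [LinearMap.mulLeft_apply] at hxy
          exact mul_left_cancel₀ (inv_ne_zero hcb) hxy))
      exact h2
    have hρan : QLF.Anisotropic 2 ρ := (anisotropic_iff_linearIndependent ρ).mpr hρind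
    have hρsub : QLF.Subform 2 ρ (QLF.pfister 2 πc) :=
      subform_of_mem_span hρan (fun j => hρP j)
    have hspanρ : Submodule.map (LinearMap.mulLeft (Kt (0:F)) (c*b))
        (span (Kt (0:F)) (range ρ)) = U := by
      rw [← span_range_mul]
      have he : (fun j => (c*b) * ρ j) = fun j => ((uB j : F)) := funext fun j => by
        rw [hρdef]
        show (c*b) * ((c*b)⁻¹ * _) = _
        rw [mul_inv_cancel_left₀ hcb]
      rw [he, show (fun j => ((uB j : F))) = (U.subtype) ∘ ⇑uB from rfl, Set.range_comp,
        Submodule.span_image, Basis.span_eq, Submodule.map_subtype_top]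
    have hψspan0 : span (Kt (0:F)) (range ψ) =
        Submodule.map (LinearMap.mulLeft (Kt (0:F)) c)
          (span (Kt (0:F)) (range (QLF.pfister 2 πc)) ⊔
            Submodule.map (LinearMap.mulLeft (Kt (0:F)) b) (span (Kt (0:F)) (range ρ))) := by
      rw [Submodule.map_sup, hWdec]
      congr 1
      rw [← Submodule.map_comp, ← LinearMap.mulLeft_mul]
      exact hspanρ.symm
    have hmemRHS : ∀ i, ψ i ∈ span (Kt (0:F))
        (range (fun i => c * Sum.elim (QLF.pfister 2 πc) (fun j => b * ρ j) i)) := by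
      intro i
      rw [span_range_scaled, ← hψspan0]
      exact subset_span ⟨i, rfl⟩
    have hcardψ : Fintype.card (Fin m) = Fintype.card ((Fin r → Fin 2) ⊕ Fin s) := by
      simp only [Fintype.card_fin, Fintype.card_sum, Fintype.card_fun]
      omega
    have hisoψ : QLF.Isometric 2 ψ
        (fun i => c * Sum.elim (QLF.pfister 2 πc) (fun j => b * ρ j) i) :=
      isometric_of_mem_span hψan hmemRHS hcardψ
    have hψspan : ∀ t : F, span (Kt t) (range ψ) =
        Submodule.map (LinearMap.mulLeft (Kt t) c)
          (span (Kt t) (range (QLF.pfister 2 πc)) ⊔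
            Submodule.map (LinearMap.mulLeft (Kt t) b) (span (Kt t) (range ρ))) := by
      intro t
      rw [isometric_span_eq (Kt t) (fun x => sq_mem_Kt t x) hisoψ, span_range_scaled]
    refine ⟨s, ρ, hρsub, ⟨c, hc, hisoψ⟩, ?_⟩
    refine f_to_wve rfl ?_
    intro t
    refine fside (πc := πc) (b := b) (t := t) hbP hρP hσmem hρind hσind ?_
    have h1 := hWVE t
    rw [hφspan t, hψspan t, finrank_map_mulLeft _ ha, finrank_map_mulLeft _ hc] at h1
    exact h1.symm
  
end Main

end QLFAux

/-- Characteristic 2. Let `φ ∼ᵥ₀ ψ` be anisotropic totally singular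
quadratic forms, `φ` a special quasi-Pfister neighbor given by a triple `(π, b, σ)`,
and `cπ ⊆ ψ` for some `c ∈ F×`. Then `ψ` is a special quasi-Pfister neighbor given by
a triple `(π, b, ρ)` with `ρ ⊆ π` and `ρ ∼ᵥ₀ σ`. -/
theorem stmt_8 {F : Type u} [Field F] [CharP F 2]
    {n m r s : ℕ} (φ : Fin n → F) (ψ : Fin m → F)
    (hφan : QLF.Anisotropic 2 φ) (hψan : QLF.Anisotropic 2 ψ)
    (h : QLF.WeakVishikEquiv 2 φ ψ)
    (πc : Fin r → F) (hπc : ∀ i, πc i ≠ 0) (b : F) (hb : b ≠ 0)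
    (σ : Fin s → F) (hσπ : QLF.Subform 2 σ (QLF.pfister 2 πc))
    (hspn : QLF.Similar 2 φ (Sum.elim (QLF.pfister 2 πc) fun j => b * σ j))
    (c : F) (hc : c ≠ 0)
    (hcπ : QLF.Subform 2 (fun e => c * QLF.pfister 2 πc e) ψ) :
    ∃ (s' : ℕ) (ρ : Fin s' → F),
      QLF.Subform 2 ρ (QLF.pfister 2 πc) ∧
      QLF.Similar 2 ψ (Sum.elim (QLF.pfister 2 πc) fun j => b * ρ j) ∧
      QLF.WeakVishikEquiv 2 ρ σ :=
  QLFAux.main φ ψ hφan hψan h πc hπc b hb σ hσπ hspn c hc hcπ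
end

section
/- Let F be a field of characteristic 2, let π be a quasi-Pfister form over F, b ∈ F×, and let σ, ρ ⊆ π be totally singular quadratic forms over F with 1 ∈ D_F(σ) ∩ D_F(ρ), such that φ = π ⊥ bσ and ψ = π ⊥ bρ are anisotropic over F. If φ and ψ are Vishik equivalent, then N_F(σ) = N_F(ρ). -/
/-!
Diagonal quasilinear `p`-forms over a field `F` of characteristic `p`,
following Hoffmann and Zemková. A form of dimension `n` is recorded by its
coefficient tuple `a : ι → F` (for a finite index type `ι`), the form being
`x ↦ ∑ i, a i * (x i)^p`.
-/

universe u

set_option synthInstance.maxHeartbeats 1000000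
set_option maxHeartbeats 2000000

namespace Stmt9

open QLF

variable {E : Type*} [Field E] [CharP E 2]

/-- Twisted codomain: `E` with scalar action `c • x = c^2 * x`. -/
def Tw (E : Type*) := E

instance {E : Type*} [Field E] : AddCommGroup (Tw E) := inferInstanceAs (AddCommGroup E)

instance : Module E (Tw E) :=
  letI : ExpChar E 2 := .prime Fact.out
  Module.compHom E (frobenius E 2)

def toTw {E : Type*} : E → Tw E := fun x => x

lemma tw_smul (c : E) (x : Tw E) : c • x = c ^ 2 * (show E from x) := rfl

variable {ι : Type*} [Fintype ι]

/-- The form as a genuine linear map into the twisted module. -/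
noncomputable def Lform (a : ι → E) : (ι → E) →ₗ[E] Tw E where
  toFun x := (eval 2 a x : E)
  map_add' x y := by
    show eval 2 a (x + y) = eval 2 a x + eval 2 a y
    simp only [eval, Pi.add_apply]
    rw [← Finset.sum_add_distrib]
    exact Finset.sum_congr rfl fun i _ => by rw [CharTwo.add_sq, mul_add]
  map_smul' c x := by
    have h1 : eval 2 a (c • x) = c ^ 2 * eval 2 a x := by
      simp only [eval, Pi.smul_apply, smul_eq_mul, Finset.mul_sum]
      exact Finset.sum_congr rfl fun i _ => by rw [mul_pow]; ring
    exact h1.trans (tw_smul c (toTw (eval 2 a x))).symm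

lemma Lform_apply (a : ι → E) (x : ι → E) : (show E from Lform a x) = eval 2 a x := rfl

lemma ker_Lform (a : ι → E) : LinearMap.ker (Lform a) = zeroSubmodule 2 a := by
  ext x
  exact Iff.rfl

lemma defect_add_finrank (a : ι → E) :
    defect 2 a + Module.finrank E (LinearMap.range (Lform a)) = Fintype.card ι := by
  have h := LinearMap.finrank_range_add_finrank_ker (Lform a)
  rw [ker_Lform, Module.finrank_pi] at h
  unfold defect
  omega

lemma eval_single {F : Type*} [CommRing F] {ι : Type*} [Fintype ι] [DecidableEq ι]
    (a : ι → F) (i : ι) : eval 2 a (Pi.single i 1) = a i := by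
  unfold eval
  rw [Finset.sum_eq_single i]
  · simp
  · intro j _ hj; simp [Pi.single_eq_of_ne hj]
  · intro h; exact absurd (Finset.mem_univ i) h

lemma eval_sum_elim {F : Type*} [CommRing F] {ι κ : Type*} [Fintype ι] [Fintype κ]
    (a : ι → F) (b : κ → F) (x : ι → F) (y : κ → F) :
    eval 2 (Sum.elim a b) (Sum.elim x y) = eval 2 a x + eval 2 b y := by
  unfold eval
  rw [Fintype.sum_sum_type]
  rfl

lemma eval_zero' {F : Type*} [CommRing F] {ι : Type*} [Fintype ι] (a : ι → F) :
    eval 2 a 0 = 0 := by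
  unfold eval
  simp

lemma sq_injective {E : Type*} [Field E] [CharP E 2] :
    Function.Injective (fun x : E => x ^ 2) := by
  haveI : ExpChar E 2 := .prime Fact.out
  intro x y hxy
  exact frobenius_inj E 2 (by simpa [frobenius_def] using hxy)

variable {F : Type u} [Field F] [CharP F 2]

/-- The field `E = K^{1/2}` inside an algebraic closure of `F`. -/
noncomputable def bigE (K : Subfield F) : Subfield (AlgebraicClosure F) :=
  haveI : CharP (AlgebraicClosure F) 2 :=
    charP_of_injective_algebraMap (algebraMap F (AlgebraicClosure F)).injective 2
  haveI : ExpChar (AlgebraicClosure F) 2 := .prime Fact.out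
  Subfield.comap (frobenius (AlgebraicClosure F) 2)
    (K.map (algebraMap F (AlgebraicClosure F)))

lemma mem_bigE {K : Subfield F} {x : AlgebraicClosure F} :
    x ∈ bigE K ↔ x ^ 2 ∈ K.map (algebraMap F (AlgebraicClosure F)) := by
  haveI : CharP (AlgebraicClosure F) 2 :=
    charP_of_injective_algebraMap (algebraMap F (AlgebraicClosure F)).injective 2
  haveI : ExpChar (AlgebraicClosure F) 2 := .prime Fact.out
  rw [bigE, Subfield.mem_comap, frobenius_def]

/-- The embedding `F → E`. -/
noncomputable def fE (K : Subfield F) (hK : ∀ x : F, x ^ 2 ∈ K) : F →+* ↥(bigE K) :=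
  RingHom.codRestrict (algebraMap F (AlgebraicClosure F)) (bigE K) (fun x => by
    rw [mem_bigE, ← map_pow]
    exact ⟨x ^ 2, hK x, rfl⟩)

lemma fE_coe (K : Subfield F) (hK : ∀ x : F, x ^ 2 ∈ K) (x : F) :
    (fE K hK x : AlgebraicClosure F) = algebraMap F (AlgebraicClosure F) x := rfl

lemma charP_bigE (K : Subfield F) (hK : ∀ x : F, x ^ 2 ∈ K) : CharP ↥(bigE K) 2 :=
  charP_of_injective_ringHom (fE K hK).injective 2

lemma exists_sq_eq (K : Subfield F) (hK : ∀ x : F, x ^ 2 ∈ K) (k : ↥K) :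
    ∃ y : ↥(bigE K), y ^ 2 = fE K hK (k : F) := by
  obtain ⟨z, hz⟩ := IsAlgClosed.exists_pow_nat_eq
    (algebraMap F (AlgebraicClosure F) (k : F)) (n := 2) (by norm_num)
  have hzmem : z ∈ bigE K := by
    rw [mem_bigE, hz]; exact ⟨(k : F), k.2, rfl⟩
  refine ⟨⟨z, hzmem⟩, ?_⟩
  ext
  exact hz

lemma sq_to_K (K : Subfield F) (hK : ∀ x : F, x ^ 2 ∈ K) (y : ↥(bigE K)) :
    ∃ k : ↥K, y ^ 2 = fE K hK (k : F) := by
  have hy := y.2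
  rw [mem_bigE] at hy
  obtain ⟨x, hxK, hx⟩ := hy
  refine ⟨⟨x, hxK⟩, ?_⟩
  ext
  exact hx.symm

/-- The "square root" bijection `K ≃ E`. -/
noncomputable def gE (K : Subfield F) (hK : ∀ x : F, x ^ 2 ∈ K) : ↥K → ↥(bigE K) :=
  fun k => Classical.choose (exists_sq_eq K hK k)

lemma gE_spec (K : Subfield F) (hK : ∀ x : F, x ^ 2 ∈ K) (k : ↥K) :
    gE K hK k ^ 2 = fE K hK (k : F) :=
  Classical.choose_spec (exists_sq_eq K hK k)

lemma gE_bijective (K : Subfield F) (hK : ∀ x : F, x ^ 2 ∈ K) :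
    Function.Bijective (gE K hK) := by
  haveI := charP_bigE K hK
  constructor
  · intro k k' hkk
    have : fE K hK (k : F) = fE K hK (k' : F) := by
      rw [← gE_spec K hK k, ← gE_spec K hK k', hkk]
    exact Subtype.coe_injective ((fE K hK).injective this)
  · intro y
    obtain ⟨k, hk⟩ := sq_to_K K hK y
    exact ⟨k, sq_injective (by show gE K hK k ^ 2 = y ^ 2; rw [gE_spec K hK k, ← hk])⟩

lemma gE_zero (K : Subfield F) (hK : ∀ x : F, x ^ 2 ∈ K) : gE K hK 0 = 0 := by
  haveI := charP_bigE K hK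
  apply sq_injective (E := ↥(bigE K))
  show gE K hK 0 ^ 2 = (0 : ↥(bigE K)) ^ 2
  rw [gE_spec]
  simp

section Transfer

variable (K : Subfield F) (hK : ∀ x : F, x ^ 2 ∈ K)
variable {ι : Type*} [Fintype ι] [DecidableEq ι] (Φ : ι → F)

lemma mem_range_iff (y : Tw ↥(bigE K)) :
    y ∈ LinearMap.range (Lform (⇑(fE K hK) ∘ Φ)) ↔
      ∃ x ∈ Submodule.span ↥K (Set.range Φ), toTw (fE K hK x) = y := by
  haveI := charP_bigE K hK
  constructor
  · rintro ⟨c, rfl⟩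
    choose k hk using fun i => sq_to_K K hK (c i)
    refine ⟨∑ i, (k i : F) * Φ i, ?_, ?_⟩
    · exact Submodule.sum_mem _ fun i _ =>
        Submodule.smul_mem _ (k i) (Submodule.subset_span ⟨i, rfl⟩)
    · show toTw (fE K hK (∑ i, (k i : F) * Φ i)) = Lform (⇑(fE K hK) ∘ Φ) c
      have : fE K hK (∑ i, (k i : F) * Φ i) = eval 2 (⇑(fE K hK) ∘ Φ) c := by
        rw [map_sum]
        unfold eval
        refine Finset.sum_congr rfl fun i _ => ?_
        rw [map_mul, ← hk i, Function.comp_apply, mul_comm]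
      exact congrArg toTw this
  · rintro ⟨x, hx, rfl⟩
    induction hx using Submodule.span_induction with
    | mem z hz =>
        obtain ⟨i, rfl⟩ := hz
        refine ⟨Pi.single i 1, ?_⟩
        show toTw (eval 2 (⇑(fE K hK) ∘ Φ) (Pi.single i 1)) = toTw (fE K hK (Φ i))
        rw [eval_single]
        rfl
    | zero =>
        refine ⟨0, ?_⟩
        show toTw (eval 2 (⇑(fE K hK) ∘ Φ) 0) = toTw (fE K hK 0)
        rw [map_zero]
        show toTw (∑ i, (⇑(fE K hK) ∘ Φ) i * (0:ι → ↥(bigE K)) i ^ 2) = toTw 0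
        simp
    | add z w hz hw ihz ihw =>
        have : toTw (fE K hK (z + w)) = toTw (fE K hK z) + toTw (fE K hK w) := by
          show toTw (fE K hK (z + w)) = toTw (fE K hK z + fE K hK w)
          rw [map_add]
        rw [this]
        exact Submodule.add_mem _ ihz ihw
    | smul k z hz ih =>
        have : toTw (fE K hK (k • z)) = gE K hK k • toTw (fE K hK z) := by
          rw [tw_smul, gE_spec]
          show toTw (fE K hK ((k : F) * z)) = toTw (fE K hK (k : F) * fE K hK z)
          rw [map_mul]
        rw [this]
        exact Submodule.smul_mem _ _ ih

lemma rank_transfer :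
    Module.finrank ↥K (Submodule.span ↥K (Set.range Φ)) =
      Module.finrank ↥(bigE K) (LinearMap.range (Lform (⇑(fE K hK) ∘ Φ))) := by
  haveI := charP_bigE K hK
  set S := Submodule.span ↥K (Set.range Φ)
  set R := LinearMap.range (Lform (⇑(fE K hK) ∘ Φ))
  have hfun : ∀ z : ↥S, toTw (fE K hK (z : F)) ∈ R := fun z =>
    (mem_range_iff K hK Φ _).mpr ⟨(z : F), z.2, rfl⟩
  let φfun : ↥S → ↥R := fun z => ⟨toTw (fE K hK (z : F)), hfun z⟩
  have hbij : Function.Bijective φfun := by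
    constructor
    · intro z w hzw
      apply Subtype.coe_injective
      exact (fE K hK).injective (congrArg Subtype.val hzw)
    · rintro ⟨y, hy⟩
      obtain ⟨x, hx, hxy⟩ := (mem_range_iff K hK Φ y).mp hy
      exact ⟨⟨x, hx⟩, Subtype.ext hxy⟩
  let j : ↥S ≃+ ↥R := AddEquiv.mk' (Equiv.ofBijective φfun hbij) (by
    intro z w
    apply Subtype.ext
    show toTw (fE K hK ((z : F) + (w : F))) = toTw (fE K hK (z : F) + fE K hK (w : F))
    rw [map_add])
  have hrank := rank_eq_of_equiv_equiv (⟨gE K hK, gE_zero K hK⟩ : ZeroHom ↥K ↥(bigE K)) j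
    (gE_bijective K hK) (by
      intro k z
      apply Subtype.ext
      show toTw (fE K hK ((k : F) * (z : F))) = gE K hK k • toTw (fE K hK (z : F))
      rw [tw_smul, gE_spec]
      show toTw (fE K hK ((k : F) * (z : F))) = toTw (fE K hK (k : F) * fE K hK (z : F))
      rw [map_mul])
  simpa [Module.finrank] using congrArg Cardinal.toNat hrank

end Transfer

section Pfister

variable {r : ℕ} (πc : Fin r → F)

lemma fin2_pow_mul (a b : Fin 2) (u : F) :
    u ^ (a : ℕ) * u ^ (b : ℕ) = (u ^ ((a : ℕ) * (b : ℕ))) ^ 2 * u ^ (((a + b) : Fin 2) : ℕ) := by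
  fin_cases a <;> fin_cases b <;> simp <;> ring

lemma pfister_mul (e e' : Fin r → Fin 2) :
    pfister 2 πc e * pfister 2 πc e' =
      (∏ i, πc i ^ ((e i : ℕ) * (e' i : ℕ))) ^ 2 * pfister 2 πc (e + e') := by
  unfold pfister
  rw [← Finset.prod_mul_distrib, ← Finset.prod_pow, ← Finset.prod_mul_distrib]
  refine Finset.prod_congr rfl fun i _ => ?_
  rw [fin2_pow_mul (e i) (e' i) (πc i)]
  rfl

/-- Membership in the `F²`-span of the coefficients of the quasi-Pfister form. -/
def inPi (x : F) : Prop :=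
  ∃ c : (Fin r → Fin 2) → F, x = ∑ e, c e ^ 2 * pfister 2 πc e

lemma inPi_zero : inPi πc 0 := ⟨0, by simp⟩

lemma inPi_add {x y : F} (hx : inPi πc x) (hy : inPi πc y) : inPi πc (x + y) := by
  obtain ⟨c, rfl⟩ := hx
  obtain ⟨d, rfl⟩ := hy
  refine ⟨c + d, ?_⟩
  rw [← Finset.sum_add_distrib]
  refine Finset.sum_congr rfl fun e _ => ?_
  rw [Pi.add_apply, CharTwo.add_sq]
  ring

lemma inPi_sq_mul (u : F) {x : F} (hx : inPi πc x) : inPi πc (u ^ 2 * x) := by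
  obtain ⟨c, rfl⟩ := hx
  refine ⟨fun e => u * c e, ?_⟩
  rw [Finset.mul_sum]
  refine Finset.sum_congr rfl fun e _ => ?_
  ring

lemma inPi_single (u : F) (e0 : Fin r → Fin 2) : inPi πc (u ^ 2 * pfister 2 πc e0) := by
  classical
  refine ⟨fun e => if e = e0 then u else 0, ?_⟩
  rw [Finset.sum_eq_single e0]
  · simp
  · intro e _ he
    simp [he]
  · intro he
    exact absurd (Finset.mem_univ e0) he

lemma inPi_one : inPi πc 1 := by
  have h := inPi_single πc 1 0
  have h0 : pfister 2 πc 0 = 1 := by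
    unfold pfister
    simp
  rw [h0] at h
  simpa using h

lemma inPi_pfister (e0 : Fin r → Fin 2) : inPi πc (pfister 2 πc e0) := by
  have h := inPi_single πc 1 e0
  simpa using h

lemma inPi_mul {x y : F} (hx : inPi πc x) (hy : inPi πc y) : inPi πc (x * y) := by
  haveI : ExpChar F 2 := .prime Fact.out
  obtain ⟨c, rfl⟩ := hx
  obtain ⟨d, rfl⟩ := hy
  set P := pfister 2 πc with hP
  set M : (Fin r → Fin 2) → (Fin r → Fin 2) → F :=
    fun e e' => ∏ i, πc i ^ ((e i : ℕ) * (e' i : ℕ)) with hM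
  have hadd : ∀ e e'' : Fin r → Fin 2, e + (e + e'') = e'' := by
    intro e e''
    funext i
    have h2 : ∀ a : Fin 2, a + a = 0 := by decide
    simp only [Pi.add_apply]
    rw [← add_assoc, h2, zero_add]
  refine ⟨fun e'' => ∑ e, c e * d (e + e'') * M e (e + e''), ?_⟩
  have h1 : ∀ e e' : Fin r → Fin 2,
      (c e ^ 2 * P e) * (d e' ^ 2 * P e') = (c e * d e' * M e e') ^ 2 * P (e + e') := by
    intro e e'
    have hh : (c e ^ 2 * P e) * (d e' ^ 2 * P e') = (c e ^ 2 * d e' ^ 2) * (P e * P e') := by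
      ring
    rw [hh, hP, pfister_mul]
    rw [hM]
    ring
  calc (∑ e, c e ^ 2 * P e) * (∑ e', d e' ^ 2 * P e')
      = ∑ e, ∑ e', (c e ^ 2 * P e) * (d e' ^ 2 * P e') := Finset.sum_mul_sum _ _ _ _
    _ = ∑ e, ∑ e', (c e * d e' * M e e') ^ 2 * P (e + e') :=
        Finset.sum_congr rfl fun e _ => Finset.sum_congr rfl fun e' _ => h1 e e'
    _ = ∑ e, ∑ e'', (c e * d (e + e'') * M e (e + e'')) ^ 2 * P e'' := by
        refine Finset.sum_congr rfl fun e _ => ?_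
        refine (Fintype.sum_equiv (Equiv.addLeft e) _ _ fun e'' => ?_).symm
        simp only [Equiv.coe_addLeft]
        rw [hadd e e'']
    _ = ∑ e'', ∑ e, (c e * d (e + e'') * M e (e + e'')) ^ 2 * P e'' := Finset.sum_comm
    _ = ∑ e'', (∑ e, c e * d (e + e'') * M e (e + e'')) ^ 2 * P e'' := by
        refine Finset.sum_congr rfl fun e'' _ => ?_
        rw [← Finset.sum_mul, sum_pow_char]

lemma inPi_inv {x : F} (hx : inPi πc x) : inPi πc x⁻¹ := by
  rcases eq_or_ne x 0 with rfl | h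
  · rw [inv_zero]
    exact inPi_zero πc
  · have hh : x⁻¹ = (x⁻¹) ^ 2 * x := by
      field_simp
    rw [hh]
    exact inPi_sq_mul πc _ hx

lemma inPi_neg {x : F} (hx : inPi πc x) : inPi πc (-x) := by
  rw [CharTwo.neg_eq]
  exact hx

/-- `Π` as a subfield of `F`. -/
def PiSubfield : Subfield F where
  carrier := {x | inPi πc x}
  mul_mem' hx hy := inPi_mul πc hx hy
  one_mem' := inPi_one πc
  add_mem' hx hy := inPi_add πc hx hy
  zero_mem' := inPi_zero πc
  neg_mem' hx := inPi_neg πc hx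
  inv_mem' _ hx := inPi_inv πc hx

lemma mem_PiSubfield {x : F} : x ∈ PiSubfield πc ↔ inPi πc x := Iff.rfl

lemma inPi_eval (x : (Fin r → Fin 2) → F) : inPi πc (eval 2 (pfister 2 πc) x) :=
  ⟨x, Finset.sum_congr rfl fun e _ => mul_comm _ _⟩

end Pfister

theorem key {F : Type u} [Field F] [CharP F 2]
    {r s t : ℕ} (πc : Fin r → F) (b : F) (hb : b ≠ 0)
    (σ : Fin s → F) (ρ : Fin t → F)
    (hσπ : Subform 2 σ (pfister 2 πc))
    (hρπ : Subform 2 ρ (pfister 2 πc))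
    (h1σ : (1 : F) ∈ values 2 σ) (h1ρ : (1 : F) ∈ values 2 ρ)
    (hφan : Anisotropic 2 (Sum.elim (pfister 2 πc) fun j => b * σ j))
    (h : VishikEquiv 2 (Sum.elim (pfister 2 πc) fun j => b * σ j)
          (Sum.elim (pfister 2 πc) fun j => b * ρ j)) :
    normField 2 ρ ≤ normField 2 σ := by
  classical
  set K : Subfield F := normField 2 σ with hKdef
  have hK : ∀ x : F, x ^ 2 ∈ K := fun x =>
    Subfield.subset_closure (Set.mem_union_left _ ⟨x, rfl⟩)
  -- values of σ and ρ lie in Π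
  have hvalσPi : ∀ u ∈ values 2 σ, inPi πc u := by
    rintro u ⟨x, rfl⟩
    obtain ⟨T, -, hT⟩ := hσπ
    rw [hT]
    exact inPi_eval πc _
  have hvalρPi : ∀ u ∈ values 2 ρ, inPi πc u := by
    rintro u ⟨x, rfl⟩
    obtain ⟨T, -, hT⟩ := hρπ
    rw [hT]
    exact inPi_eval πc _
  have hσPi : ∀ j, inPi πc (σ j) := fun j =>
    hvalσPi _ ⟨Pi.single j 1, eval_single σ j⟩
  have hρPi : ∀ j, inPi πc (ρ j) := fun j =>
    hvalρPi _ ⟨Pi.single j 1, eval_single ρ j⟩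
  have hvalσK : ∀ u ∈ values 2 σ, u ∈ K := by
    intro u hu
    rcases eq_or_ne u 0 with rfl | hu0
    · exact K.zero_mem
    · exact Subfield.subset_closure
        (Set.mem_union_right _ ⟨u, hu, 1, h1σ, hu0, one_ne_zero, (div_one u).symm⟩)
  have hσK : ∀ j, σ j ∈ K := fun j => hvalσK _ ⟨Pi.single j 1, eval_single σ j⟩
  have hKPi : K ≤ PiSubfield πc := by
    rw [hKdef]
    apply Subfield.closure_le.mpr
    rintro z (⟨x, rfl⟩ | ⟨u, hu, v, hv, hu0, hv0, rfl⟩)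
    · show inPi πc (x ^ 2)
      simpa using inPi_sq_mul πc x (inPi_one πc)
    · exact Subfield.div_mem _ (hvalσPi u hu) (hvalσPi v hv)
  -- b is not in Π
  have hbPi : ¬ inPi πc b := by
    rintro ⟨c, hc⟩
    obtain ⟨x0, hx0⟩ := h1σ
    apply hφan
    refine ⟨Sum.elim c x0, ?_, ?_⟩
    · intro hv
      have hx00 : x0 = 0 := funext fun j => congrFun hv (Sum.inr j)
      rw [hx00, eval_zero'] at hx0
      exact one_ne_zero hx0.symm
    · rw [eval_sum_elim]
      have h1 : eval 2 (pfister 2 πc) c = b := by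
        rw [hc]
        exact Finset.sum_congr rfl fun e _ => mul_comm _ _
      have h2 : eval 2 (fun j => b * σ j) x0 = b := by
        have hh : eval 2 (fun j => b * σ j) x0 = b * eval 2 σ x0 := by
          unfold eval
          rw [Finset.mul_sum]
          exact Finset.sum_congr rfl fun j _ => by ring
        rw [hh, hx0, mul_one]
      rw [h1, h2, CharTwo.add_self_eq_zero]
  -- the Π submodule over K
  let PiMod : Submodule ↥K F :=
    { carrier := {x | inPi πc x}
      add_mem' := fun hx hy => inPi_add πc hx hy
      zero_mem' := inPi_zero πc
      smul_mem' := fun k x hx => by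
        show inPi πc ((k : F) * x)
        exact inPi_mul πc (hKPi k.2) hx }
  let A : Submodule ↥K F := Submodule.span ↥K (Set.range (pfister 2 πc))
  have hA_le' : A ≤ PiMod :=
    Submodule.span_le.mpr (by rintro z ⟨e, rfl⟩; exact inPi_pfister πc e)
  have hA_le : ∀ x ∈ A, inPi πc x := fun x hx => hA_le' hx
  let Bρ0 : Submodule ↥K F := Submodule.span ↥K (Set.range ρ)
  have hBρ0_le' : Bρ0 ≤ PiMod :=
    Submodule.span_le.mpr (by rintro z ⟨j, rfl⟩; exact hρPi j)
  have hBρ0_le : ∀ x ∈ Bρ0, inPi πc x := fun x hx => hBρ0_le' hx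
  haveI : FiniteDimensional ↥K A := FiniteDimensional.span_of_finite _ (Set.finite_range _)
  haveI : FiniteDimensional ↥K Bρ0 := FiniteDimensional.span_of_finite _ (Set.finite_range _)
  haveI : FiniteDimensional ↥K (Submodule.span ↥K {b}) :=
    FiniteDimensional.span_of_finite _ (Set.finite_singleton b)
  haveI : FiniteDimensional ↥K
      (Submodule.span ↥K (Set.range fun j => b * σ j)) :=
    FiniteDimensional.span_of_finite _ (Set.finite_range _)
  haveI : FiniteDimensional ↥K
      (Submodule.span ↥K (Set.range fun j => b * ρ j)) :=
    FiniteDimensional.span_of_finite _ (Set.finite_range _)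
  -- the main dimension equality from the Vishik hypothesis
  haveI hEchar := charP_bigE K hK
  have hdef := h.2 ↥(bigE K) (fE K hK)
  have e1 := defect_add_finrank (⇑(fE K hK) ∘ Sum.elim (pfister 2 πc) fun j => b * σ j)
  have e2 := defect_add_finrank (⇑(fE K hK) ∘ Sum.elim (pfister 2 πc) fun j => b * ρ j)
  have hcard := h.1
  have t1 := rank_transfer K hK (Sum.elim (pfister 2 πc) fun j => b * σ j)
  have t2 := rank_transfer K hK (Sum.elim (pfister 2 πc) fun j => b * ρ j)
  have main : Module.finrank ↥K
        (Submodule.span ↥K (Set.range (Sum.elim (pfister 2 πc) fun j => b * σ j))) =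
      Module.finrank ↥K
        (Submodule.span ↥K (Set.range (Sum.elim (pfister 2 πc) fun j => b * ρ j))) := by
    rw [t1, t2]
    omega
  rw [Set.Sum.elim_range, Submodule.span_union, Set.Sum.elim_range,
    Submodule.span_union] at main
  -- span of bσ is the line through b
  have hBσ : Submodule.span ↥K (Set.range fun j => b * σ j) = Submodule.span ↥K {b} := by
    apply le_antisymm
    · apply Submodule.span_le.mpr
      rintro z ⟨j, rfl⟩
      rw [SetLike.mem_coe, Submodule.mem_span_singleton]
      exact ⟨⟨σ j, hσK j⟩, mul_comm (σ j) b⟩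
    · apply Submodule.span_le.mpr
      intro z hz
      rw [Set.mem_singleton_iff] at hz
      rw [SetLike.mem_coe, hz]
      obtain ⟨x0, hx0⟩ := h1σ
      have hbeq : b = ∑ j, x0 j ^ 2 * (b * σ j) := by
        have hh : ∑ j, x0 j ^ 2 * (b * σ j) = b * eval 2 σ x0 := by
          unfold eval
          rw [Finset.mul_sum]
          exact Finset.sum_congr rfl fun j _ => by ring
        rw [hh, hx0, mul_one]
      have hmem : (∑ j, x0 j ^ 2 * (b * σ j)) ∈
          Submodule.span ↥K (Set.range fun j => b * σ j) :=
        Submodule.sum_mem _ fun j _ =>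
          Submodule.smul_mem _ (⟨x0 j ^ 2, hK (x0 j)⟩ : ↥K)
            (Submodule.subset_span ⟨j, rfl⟩)
      nth_rewrite 2 [hbeq]
      exact hmem
  have hdisj1 : A ⊓ Submodule.span ↥K {b} = ⊥ := by
    rw [Submodule.eq_bot_iff]
    intro x hx
    rw [Submodule.mem_inf] at hx
    obtain ⟨hxA, hxB⟩ := hx
    rw [Submodule.mem_span_singleton] at hxB
    obtain ⟨k, hk⟩ := hxB
    rcases eq_or_ne k 0 with rfl | hk0
    · rw [← hk]
      simp
    · exfalso
      apply hbPi
      have hkF : (k : F) ≠ 0 := fun h0 => hk0 (Subtype.ext h0)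
      have hkb : (k : F) * b = x := hk
      have hbx : b = (k : F)⁻¹ * x := by
        field_simp
        rw [mul_comm] at hkb
        exact hkb
      rw [hbx]
      exact inPi_mul πc (hKPi (K.inv_mem k.2)) (hA_le x hxA)
  -- span of bρ is b times span of ρ
  let mulb : F ≃ₗ[↥K] F :=
    { toFun := fun x => b * x
      map_add' := mul_add b
      map_smul' := fun k x => by
        show b * ((k : F) * x) = (k : F) * (b * x)
        ring
      invFun := fun x => b⁻¹ * x
      left_inv := fun x => by field_simp
      right_inv := fun x => by field_simp }
  have hBρ : Submodule.span ↥K (Set.range fun j => b * ρ j) =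
      Submodule.map (mulb : F →ₗ[↥K] F) Bρ0 := by
    rw [Submodule.map_span]
    congr 1
    ext z
    constructor
    · rintro ⟨j, rfl⟩
      exact ⟨ρ j, ⟨j, rfl⟩, rfl⟩
    · rintro ⟨w, ⟨j, rfl⟩, rfl⟩
      exact ⟨j, rfl⟩
  have hfinBρ : Module.finrank ↥K (Submodule.map (mulb : F →ₗ[↥K] F) Bρ0) =
      Module.finrank ↥K Bρ0 := LinearEquiv.finrank_map_eq mulb Bρ0
  have hdisj2 : A ⊓ Submodule.map (mulb : F →ₗ[↥K] F) Bρ0 = ⊥ := by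
    rw [Submodule.eq_bot_iff]
    intro x hx
    rw [Submodule.mem_inf] at hx
    obtain ⟨hxA, hxB⟩ := hx
    obtain ⟨y, hy, rfl⟩ := hxB
    rcases eq_or_ne y 0 with rfl | hy0
    · exact map_zero _
    · exfalso
      apply hbPi
      have hbxy : b = mulb y * y⁻¹ := by
        show b = (b * y) * y⁻¹
        field_simp
      rw [hbxy]
      exact inPi_mul πc (hA_le _ hxA) (inPi_inv πc (hBρ0_le y hy))
  haveI : FiniteDimensional ↥K (Submodule.map (mulb : F →ₗ[↥K] F) Bρ0) :=
    Module.Finite.map _ _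
  have q1 := Submodule.finrank_sup_add_finrank_inf_eq A (Submodule.span ↥K {b})
  have q2 := Submodule.finrank_sup_add_finrank_inf_eq A
    (Submodule.map (mulb : F →ₗ[↥K] F) Bρ0)
  rw [hdisj1, finrank_bot] at q1
  rw [hdisj2, finrank_bot] at q2
  have hfinb : Module.finrank ↥K (Submodule.span ↥K {b}) = 1 :=
    finrank_span_singleton hb
  rw [hBσ, hBρ] at main
  have main2 : Module.finrank ↥K ↥(A ⊔ Submodule.span ↥K {b}) =
      Module.finrank ↥K ↥(A ⊔ Submodule.map (mulb : F →ₗ[↥K] F) Bρ0) := main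
  have hBρ0fin : Module.finrank ↥K Bρ0 = 1 := by
    rw [hfinBρ] at q2
    omega
  -- conclude that all ρ j lie in K
  obtain ⟨y0, hy0⟩ := h1ρ
  have h1mem : (1 : F) ∈ Bρ0 := by
    have hh : (1 : F) = ∑ j, y0 j ^ 2 * ρ j := by
      rw [← hy0]
      exact Finset.sum_congr rfl fun j _ => mul_comm _ _
    rw [hh]
    exact Submodule.sum_mem _ fun j _ =>
      Submodule.smul_mem _ (⟨y0 j ^ 2, hK (y0 j)⟩ : ↥K)
        (Submodule.subset_span ⟨j, rfl⟩)
  have hspan1 : Submodule.span ↥K {(1 : F)} ≤ Bρ0 := by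
    apply Submodule.span_le.mpr
    intro z hz
    rw [Set.mem_singleton_iff] at hz
    subst hz
    exact h1mem
  have heq : Submodule.span ↥K {(1 : F)} = Bρ0 :=
    Submodule.eq_of_le_of_finrank_le hspan1
      (by rw [hBρ0fin, finrank_span_singleton (one_ne_zero (α := F))])
  have hρK : ∀ j, ρ j ∈ K := by
    intro j
    have hmem : ρ j ∈ Bρ0 := Submodule.subset_span ⟨j, rfl⟩
    rw [← heq, Submodule.mem_span_singleton] at hmem
    obtain ⟨k, hk⟩ := hmem
    have hk' : (k : F) * 1 = ρ j := hk
    rw [mul_one] at hk'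
    rw [← hk']
    exact k.2
  have hvalρK : ∀ u ∈ values 2 ρ, u ∈ K := by
    rintro u ⟨x, rfl⟩
    exact Subfield.sum_mem _ fun j _ => K.mul_mem (hρK j) (hK (x j))
  show normField 2 ρ ≤ K
  apply Subfield.closure_le.mpr
  rintro z (⟨x, rfl⟩ | ⟨u, hu, v, hv, hu0, hv0, rfl⟩)
  · exact hK x
  · exact K.div_mem (hvalρK u hu) (hvalρK v hv)

end Stmt9


/-- Characteristic 2. Let `π` be a quasi-Pfister form, `b ∈ F×`,
`σ, ρ ⊆ π` with `1 ∈ D_F(σ) ∩ D_F(ρ)`, and suppose `φ = π ⊥ bσ` and `ψ = π ⊥ bρ` are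
anisotropic. If `φ ∼ᵥ ψ`, then `N_F(σ) = N_F(ρ)`. -/
theorem stmt_9 {F : Type u} [Field F] [CharP F 2]
    {r s t : ℕ} (πc : Fin r → F) (hπc : ∀ i, πc i ≠ 0) (b : F) (hb : b ≠ 0)
    (σ : Fin s → F) (ρ : Fin t → F)
    (hσπ : QLF.Subform 2 σ (QLF.pfister 2 πc))
    (hρπ : QLF.Subform 2 ρ (QLF.pfister 2 πc))
    (h1σ : (1 : F) ∈ QLF.values 2 σ) (h1ρ : (1 : F) ∈ QLF.values 2 ρ)
    (hφan : QLF.Anisotropic 2 (Sum.elim (QLF.pfister 2 πc) fun j => b * σ j))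
    (hψan : QLF.Anisotropic 2 (Sum.elim (QLF.pfister 2 πc) fun j => b * ρ j))
    (h : QLF.VishikEquiv 2 (Sum.elim (QLF.pfister 2 πc) fun j => b * σ j)
          (Sum.elim (QLF.pfister 2 πc) fun j => b * ρ j)) :
    QLF.normField 2 σ = QLF.normField 2 ρ := by
  have hsymm : QLF.VishikEquiv 2 (Sum.elim (QLF.pfister 2 πc) fun j => b * ρ j)
      (Sum.elim (QLF.pfister 2 πc) fun j => b * σ j) := by
    obtain ⟨hc, hd⟩ := h
    refine ⟨hc.symm, ?_⟩
    intro E _ _ f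
    exact (hd E f).symm
  exact le_antisymm
    (Stmt9.key πc b hb ρ σ hρπ hσπ h1ρ h1σ hψan hsymm)
    (Stmt9.key πc b hb σ ρ hσπ hρπ h1σ h1ρ hφan h)
end
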